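/- arXiv:1705.06928 — 11 statements merged into one kernel-verified Lean document; each statement's English description precedes it below -/
import Mathlib

section
/- For every bisection (B, W) of a cubic graph G into two equal-size colour classes such that every monochromatic component has at most 2 vertices (a 2-bisection), the number of isolated vertices in the subgraph induced by B equals the number of isolated vertices in the subgraph induced by W, and likewise for the number of isolated edges; consequently the two induced monochromatic subgraphs are isomorphic. -/
open SimpleGraph

/-- Every connected component of the subgraph of `G` induced on `s` has at most `k` vertices. -/
def SmallComponents {V : Type*} (G : SimpleGraph V) (s : Set V) (k : ℕ) : Prop :=
  ∀ c : (G.induce s).ConnectedComponent, c.supp.ncard ≤ k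

/-- A `k`-bisection: the two colour classes `B` and `Bᶜ` have the same cardinality and
every monochromatic component has at most `k` vertices. -/
def IsKBisection {V : Type*} [Fintype V] (G : SimpleGraph V) (k : ℕ) (B : Set V) : Prop :=
  2 * B.ncard = Fintype.card V ∧ SmallComponents G B k ∧ SmallComponents G Bᶜ k

/-- A linear forest: an acyclic graph with all degrees at most 2,
i.e. every connected component is a path. -/
def IsLinearForest {V : Type*} (G : SimpleGraph V) : Prop :=
  G.IsAcyclic ∧ ∀ v : V, (G.neighborSet v).ncard ≤ 2

section Aux

lemma uniq_nbr' {V : Type*} [Fintype V] {G : SimpleGraph V} {s : Set V}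
    (hs : SmallComponents G s 2) {u v w : V}
    (hu : u ∈ s) (hv : v ∈ s) (hw : w ∈ s) (huv : G.Adj u v) (huw : G.Adj u w) : v = w := by
  by_contra hvw
  set a : s := ⟨u, hu⟩
  set b : s := ⟨v, hv⟩
  set c : s := ⟨w, hw⟩
  have hab : (G.induce s).Adj a b := by simpa [comap_adj] using huv
  have hac : (G.induce s).Adj a c := by simpa [comap_adj] using huw
  set K := (G.induce s).connectedComponentMk a with hK
  have hsub : ({a, b, c} : Set s) ⊆ K.supp := by
    intro x hx
    rcases hx with rfl | rfl | rfl
    · rfl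
    · exact (ConnectedComponent.sound hab.reachable.symm)
    · exact (ConnectedComponent.sound hac.reachable.symm)
  have h3 : ({a, b, c} : Set s).ncard = 3 := by
    rw [Set.ncard_eq_three]
    refine ⟨a, b, c, ?_, ?_, ?_, rfl⟩ <;> simp [a, b, c, Subtype.ext_iff]
    · exact huv.ne
    · exact huw.ne
    · exact hvw
  have := Set.ncard_le_ncard hsub (Set.toFinite _)
  have := hs K
  omega

lemma sum_le_one_card {α : Type*} (t : Finset α) (d : α → ℕ) (h : ∀ a ∈ t, d a ≤ 1)
    [DecidablePred (fun a => d a = 1)] :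
    ∑ a ∈ t, d a = (t.filter (fun a => d a = 1)).card := by
  rw [← Finset.sum_filter_add_sum_filter_not t (fun a => d a = 1)]
  have h1 : ∑ a ∈ t.filter (fun a => d a = 1), d a = (t.filter (fun a => d a = 1)).card := by
    rw [Finset.card_eq_sum_ones]
    exact Finset.sum_congr rfl (fun a ha => (Finset.mem_filter.mp ha).2)
  have h2 : ∑ a ∈ t.filter (fun a => ¬ d a = 1), d a = 0 := by
    apply Finset.sum_eq_zero
    intro a ha
    have h3 := Finset.mem_filter.mp ha
    have := h a h3.1
    omega
  omega

lemma count_main {V : Type*} [Fintype V] {G : SimpleGraph V} [DecidableRel G.Adj]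
    (hcubic : G.IsRegularOfDegree 3)
    {s : Set V} (hcard : 2 * s.ncard = Fintype.card V)
    (h2s : SmallComponents G s 2) (h2t : SmallComponents G sᶜ 2) :
    {v ∈ s | ∀ w ∈ s, ¬ G.Adj v w}.ncard = {v ∈ sᶜ | ∀ w ∈ sᶜ, ¬ G.Adj v w}.ncard ∧
    {v ∈ s | ∃ w ∈ s, G.Adj v w}.ncard = {v ∈ sᶜ | ∃ w ∈ sᶜ, G.Adj v w}.ncard := by
  classical
  set d : Finset V → V → ℕ := fun t v => (t.filter (fun w => G.Adj v w)).card with hd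
  set Bf := (Set.toFinite s).toFinset with hBf
  have hmemB : ∀ v, v ∈ Bf ↔ v ∈ s := fun v => Set.Finite.mem_toFinset _
  have hmemW : ∀ v, v ∈ Bfᶜ ↔ v ∈ sᶜ := by
    intro v; rw [Finset.mem_compl, hmemB]; rfl
  have hsplit : ∀ v, d Bf v + d Bfᶜ v = 3 := by
    intro v
    have hdisj : Disjoint (Bf.filter (fun w => G.Adj v w)) (Bfᶜ.filter (fun w => G.Adj v w)) :=
      Finset.disjoint_filter_filter disjoint_compl_right
    have hunion : (Bf.filter (fun w => G.Adj v w)) ∪ (Bfᶜ.filter (fun w => G.Adj v w))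
        = G.neighborFinset v := by
      rw [← Finset.filter_union, Finset.union_compl]
      ext w; simp [SimpleGraph.mem_neighborFinset]
    have hcu := Finset.card_union_of_disjoint hdisj
    rw [hunion] at hcu
    have hdeg : (G.neighborFinset v).card = 3 := hcubic v
    simp only [hd]
    omega
  have hcross : ∑ v ∈ Bf, d Bfᶜ v = ∑ w ∈ Bfᶜ, d Bf w := by
    simp only [hd, Finset.card_filter]
    rw [Finset.sum_comm]
    congr 1; ext w; congr 1; ext v
    simp [SimpleGraph.adj_comm]
  have hle : ∀ (t : Set V) (tf : Finset V), SmallComponents G t 2 → (∀ x, x ∈ tf ↔ x ∈ t) →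
      ∀ v ∈ t, d tf v ≤ 1 := by
    intro t tf ht htf v hv
    apply Finset.card_le_one.mpr
    intro a ha b hb
    simp only [Finset.mem_filter, htf] at ha hb
    exact uniq_nbr' ht hv ha.1 hb.1 ha.2 hb.2
  have hsumB : ∑ v ∈ Bf, d Bf v = (Bf.filter (fun v => d Bf v = 1)).card :=
    sum_le_one_card _ _ (fun a ha => hle s Bf h2s hmemB a ((hmemB a).mp ha))
  have hsumW : ∑ v ∈ Bfᶜ, d Bfᶜ v = (Bfᶜ.filter (fun v => d Bfᶜ v = 1)).card :=
    sum_le_one_card _ _ (fun a ha => hle sᶜ Bfᶜ h2t hmemW a ((hmemW a).mp ha))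
  have hcardB : Bf.card = s.ncard := (Set.ncard_eq_toFinset_card s (Set.toFinite s)).symm
  have hcardEq : Bf.card = Bfᶜ.card := by
    have := Finset.card_compl Bf (α := V)
    omega
  have htotB : ∑ v ∈ Bf, d Bf v + ∑ v ∈ Bf, d Bfᶜ v = 3 * Bf.card := by
    calc ∑ v ∈ Bf, d Bf v + ∑ v ∈ Bf, d Bfᶜ v = ∑ v ∈ Bf, (d Bf v + d Bfᶜ v) :=
          Finset.sum_add_distrib.symm
      _ = ∑ _v ∈ Bf, 3 := Finset.sum_congr rfl (fun v _ => hsplit v)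
      _ = 3 * Bf.card := by simp [mul_comm]
  have htotW : ∑ v ∈ Bfᶜ, d Bfᶜ v + ∑ v ∈ Bfᶜ, d Bf v = 3 * Bfᶜ.card := by
    calc ∑ v ∈ Bfᶜ, d Bfᶜ v + ∑ v ∈ Bfᶜ, d Bf v = ∑ v ∈ Bfᶜ, (d Bfᶜ v + d Bf v) :=
          Finset.sum_add_distrib.symm
      _ = ∑ _v ∈ Bfᶜ, 3 := Finset.sum_congr rfl (fun v _ => by have := hsplit v; omega)
      _ = 3 * Bfᶜ.card := by simp [mul_comm]
  have hM : (Bf.filter (fun v => d Bf v = 1)).card = (Bfᶜ.filter (fun v => d Bfᶜ v = 1)).card := by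
    omega
  have hpartB : (Bf.filter (fun v => d Bf v = 1)).card + (Bf.filter (fun v => ¬ d Bf v = 1)).card
      = Bf.card := Finset.card_filter_add_card_filter_not _
  have hpartW : (Bfᶜ.filter (fun v => d Bfᶜ v = 1)).card
      + (Bfᶜ.filter (fun v => ¬ d Bfᶜ v = 1)).card = Bfᶜ.card :=
    Finset.card_filter_add_card_filter_not _
  have hI : (Bf.filter (fun v => ¬ d Bf v = 1)).card
      = (Bfᶜ.filter (fun v => ¬ d Bfᶜ v = 1)).card := by omega
  have hpred : ∀ (t : Set V) (tf : Finset V), (∀ x, x ∈ tf ↔ x ∈ t) →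
      ∀ v, (d tf v = 0 ↔ ∀ w ∈ t, ¬ G.Adj v w) := by
    intro t tf htf v
    simp only [hd, Finset.card_eq_zero, Finset.filter_eq_empty_iff, htf]
  have key : ∀ (t : Set V) (tf : Finset V) (ht : SmallComponents G t 2)
      (htf : ∀ x, x ∈ tf ↔ x ∈ t),
      {v ∈ t | ∀ w ∈ t, ¬ G.Adj v w} = ↑(tf.filter (fun v => ¬ d tf v = 1))
      ∧ {v ∈ t | ∃ w ∈ t, G.Adj v w} = ↑(tf.filter (fun v => d tf v = 1)) := by
    intro t tf ht htf
    constructor <;> ext v <;>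
        simp only [Set.mem_setOf_eq, Finset.coe_filter, htf] <;>
        constructor <;> rintro ⟨hv, h⟩ <;> refine ⟨hv, ?_⟩
    · have h0 : d tf v = 0 := (hpred t tf htf v).mpr h
      omega
    · intro w hw hadj
      have hne : ¬ d tf v = 0 := by
        rw [hpred t tf htf v]; push_neg; exact ⟨w, hw, hadj⟩
      have := hle t tf ht htf v hv
      omega
    · have hne : ¬ d tf v = 0 := by
        rw [hpred t tf htf v]; push_neg
        obtain ⟨w, hw, hadj⟩ := h; exact ⟨w, hw, hadj⟩
      have := hle t tf ht htf v hv
      omega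
    · have hne : ¬ d tf v = 0 := by omega
      rw [hpred t tf htf v] at hne; push_neg at hne
      obtain ⟨w, hw, hadj⟩ := hne; exact ⟨w, hw, hadj⟩
  obtain ⟨hB1, hB2⟩ := key s Bf h2s hmemB
  obtain ⟨hW1, hW2⟩ := key sᶜ Bfᶜ h2t hmemW
  rw [hB1, hB2, hW1, hW2,
    Set.ncard_coe_finset, Set.ncard_coe_finset, Set.ncard_coe_finset, Set.ncard_coe_finset]
  exact ⟨hI, hM⟩

open scoped Classical in
noncomputable def matchFn {V : Type*} (G : SimpleGraph V) (s : Set V) : ↥s → ↥s :=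
  fun a => if h : ∃ b : ↥s, G.Adj ↑a ↑b then h.choose else a

variable {V : Type*} [Fintype V] {G : SimpleGraph V} {s : Set V}

lemma matchFn_adj {a : ↥s} (h : ∃ b : ↥s, G.Adj ↑a ↑b) :
    G.Adj ↑a ↑(matchFn G s a) := by
  classical
  rw [matchFn]
  rw [dif_pos h]
  exact h.choose_spec

lemma matchFn_fix {a : ↥s} (h : ¬ ∃ b : ↥s, G.Adj ↑a ↑b) :
    matchFn G s a = a := by
  classical
  rw [matchFn]
  rw [dif_neg h]

lemma matchFn_eq_of_adj (hs : SmallComponents G s 2) {a b : ↥s} (h : G.Adj ↑a ↑b) :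
    matchFn G s a = b := by
  have hex : ∃ b : ↥s, G.Adj ↑a ↑b := ⟨b, h⟩
  have h1 := matchFn_adj hex
  exact Subtype.ext (uniq_nbr' hs a.2 (matchFn G s a).2 b.2 h1 h)

lemma matchFn_invol (hs : SmallComponents G s 2) : Function.Involutive (matchFn G s) := by
  intro a
  by_cases h : ∃ b : ↥s, G.Adj ↑a ↑b
  · exact matchFn_eq_of_adj hs (matchFn_adj h).symm
  · rw [matchFn_fix h, matchFn_fix h]

lemma matchFn_ne_iff (hs : SmallComponents G s 2) {a : ↥s} :
    matchFn G s a ≠ a ↔ ∃ w ∈ s, G.Adj ↑a w := by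
  constructor
  · intro h
    by_cases hex : ∃ b : ↥s, G.Adj ↑a ↑b
    · obtain ⟨b, hb⟩ := hex
      exact ⟨↑b, b.2, hb⟩
    · exact absurd (matchFn_fix hex) h
  · rintro ⟨w, hw, hadj⟩
    have h2 : matchFn G s a = ⟨w, hw⟩ :=
      matchFn_eq_of_adj hs (show G.Adj ↑a ↑(⟨w, hw⟩ : ↥s) from hadj)
    intro hc
    rw [hc] at h2
    have h3 : (a : V) = w := congrArg Subtype.val h2
    rw [h3] at hadj
    exact G.loopless.irrefl w hadj

lemma matchFn_adj_iff (hs : SmallComponents G s 2) {a b : ↥s} :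
    G.Adj ↑a ↑b ↔ matchFn G s a = b ∧ a ≠ b := by
  constructor
  · intro h
    exact ⟨matchFn_eq_of_adj hs h, fun hc => G.loopless.irrefl _ (by rw [hc] at h; exact h)⟩
  · rintro ⟨rfl, hne⟩
    have h1 : matchFn G s a ≠ a := Ne.symm hne
    have hex : ∃ c : ↥s, G.Adj ↑a ↑c := by
      by_contra hc
      exact h1 (matchFn_fix hc)
    exact matchFn_adj hex

lemma support_card [Fintype ↥s] [DecidableEq ↥s] (hs : SmallComponents G s 2) :
    (Function.Involutive.toPerm _ (matchFn_invol hs)).support.card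
      = {v ∈ s | ∃ w ∈ s, G.Adj v w}.ncard := by
  classical
  rw [Set.ncard_eq_toFinset_card _ (Set.toFinite _)]
  refine Finset.card_bij (fun a _ => (a : V)) ?_ ?_ ?_
  · intro a ha
    rw [Equiv.Perm.mem_support] at ha
    have hne : matchFn G s a ≠ a := by
      simpa [Function.Involutive.coe_toPerm] using ha
    rw [Set.Finite.mem_toFinset]
    exact ⟨a.2, (matchFn_ne_iff hs).mp hne⟩
  · intro a _ b _ h
    exact Subtype.ext h
  · intro v hv
    rw [Set.Finite.mem_toFinset] at hv
    obtain ⟨hv1, hv2⟩ := hv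
    refine ⟨⟨v, hv1⟩, ?_, rfl⟩
    rw [Equiv.Perm.mem_support]
    simpa [Function.Involutive.coe_toPerm] using (matchFn_ne_iff hs).mpr hv2

lemma invol_cycleType {α : Type*} [Fintype α] [DecidableEq α] {p : Equiv.Perm α}
    (hp : ∀ x, p (p x) = x) : p.cycleType = Multiset.replicate (p.support.card / 2) 2 := by
  have h2 : ∀ n ∈ p.cycleType, n = 2 := by
    intro n hn
    have hge := Equiv.Perm.two_le_of_mem_cycleType hn
    have hdvd : n ∣ orderOf p := by
      rw [← Equiv.Perm.lcm_cycleType]; exact Multiset.dvd_lcm hn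
    have hord : orderOf p ∣ 2 := orderOf_dvd_of_pow_eq_one (by ext x; simp [pow_succ, hp x])
    have := Nat.le_of_dvd (by norm_num) (hdvd.trans hord)
    omega
  have hrep : p.cycleType = Multiset.replicate p.cycleType.card 2 :=
    Multiset.eq_replicate.mpr ⟨rfl, h2⟩
  have hsum := Equiv.Perm.sum_cycleType p
  rw [hrep, Multiset.sum_replicate, smul_eq_mul] at hsum
  rw [hrep]
  congr 1
  omega

lemma invol_conj {α β : Type*} [Fintype α] [DecidableEq α] [Fintype β] [DecidableEq β]
    (e : α ≃ β) (p : Equiv.Perm α) (q : Equiv.Perm β) (hp : ∀ x, p (p x) = x)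
    (hq : ∀ x, q (q x) = x) (hcard : p.support.card = q.support.card) :
    ∃ φ : α ≃ β, ∀ x, φ (p x) = q (φ x) := by
  set q' : Equiv.Perm α := (e.trans q).trans e.symm with hq'def
  have happ : ∀ a, q' a = e.symm (q (e a)) := fun a => rfl
  have hq' : ∀ x, q' (q' x) = x := by
    intro x
    simp [happ, hq]
  have hsupp : q'.support.card = q.support.card := by
    apply Finset.card_bij (fun a _ => e a)
    · intro a ha
      simp only [Equiv.Perm.mem_support, happ] at ha ⊢
      intro hc
      exact ha (by rw [hc]; simp)
    · intro a _ b _ hab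
      exact e.injective hab
    · intro b hb
      refine ⟨e.symm b, ?_, by simp⟩
      simp only [Equiv.Perm.mem_support, happ] at hb ⊢
      simp only [Equiv.apply_symm_apply]
      intro hc
      exact hb (e.symm.injective hc)
  have hconj : IsConj p q' := by
    rw [Equiv.Perm.isConj_iff_cycleType_eq, invol_cycleType hp, invol_cycleType hq', hsupp, hcard]
  obtain ⟨c, hc⟩ := isConj_iff.mp hconj
  refine ⟨Equiv.trans (c : Equiv.Perm α) e, fun x => ?_⟩
  have hx : c (p x) = q' (c x) := by
    have h := congrArg (fun f : Equiv.Perm α => f (c x)) hc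
    simpa [mul_assoc] using h
  simp only [Equiv.trans_apply, Equiv.Perm.coe_mul] at hx ⊢
  rw [hx, happ, Equiv.apply_symm_apply]

lemma edge_set_eq (hs : SmallComponents G s 2) :
    {e : Sym2 V | ∃ u v, e = s(u, v) ∧ G.Adj u v ∧ u ∈ s ∧ v ∈ s ∧
        (∀ w ∈ s, G.Adj u w → w = v) ∧ (∀ w ∈ s, G.Adj v w → w = u)}
      = Sym2.map (Subtype.val : ↥s → V) '' (G.induce s).edgeSet := by
  ext e
  simp only [Set.mem_setOf_eq, Set.mem_image]
  constructor
  · rintro ⟨u, v, rfl, hadj, hu, hv, -, -⟩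
    exact ⟨s(⟨u, hu⟩, ⟨v, hv⟩), by simpa [SimpleGraph.mem_edgeSet] using hadj, by simp⟩
  · rintro ⟨e', he', rfl⟩
    induction e' using Sym2.ind with
    | _ a b =>
      rw [SimpleGraph.mem_edgeSet] at he'
      have hadj : G.Adj ↑a ↑b := he'
      refine ⟨↑a, ↑b, by simp, hadj, a.2, b.2, ?_, ?_⟩
      · intro w hw h
        exact uniq_nbr' hs a.2 hw b.2 h hadj
      · intro w hw h
        exact uniq_nbr' hs b.2 hw a.2 h hadj.symm

end Aux

/-- In every 2-bisection of a cubic graph, the numbers of isolated vertices in the two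
induced monochromatic subgraphs agree, the numbers of isolated edges agree, and the two
induced monochromatic subgraphs are isomorphic. -/
theorem stmt0 {V : Type*} [Fintype V] (G : SimpleGraph V) [DecidableRel G.Adj]
    (hcubic : G.IsRegularOfDegree 3) (B : Set V) (hB : IsKBisection G 2 B) :
    {v ∈ B | ∀ w ∈ B, ¬ G.Adj v w}.ncard = {v ∈ Bᶜ | ∀ w ∈ Bᶜ, ¬ G.Adj v w}.ncard ∧
    {e : Sym2 V | ∃ u v, e = s(u, v) ∧ G.Adj u v ∧ u ∈ B ∧ v ∈ B ∧
        (∀ w ∈ B, G.Adj u w → w = v) ∧ (∀ w ∈ B, G.Adj v w → w = u)}.ncard =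
      {e : Sym2 V | ∃ u v, e = s(u, v) ∧ G.Adj u v ∧ u ∈ Bᶜ ∧ v ∈ Bᶜ ∧
        (∀ w ∈ Bᶜ, G.Adj u w → w = v) ∧ (∀ w ∈ Bᶜ, G.Adj v w → w = u)}.ncard ∧
    Nonempty (G.induce B ≃g G.induce Bᶜ) := by
  classical
  obtain ⟨hcard, h2B, h2W⟩ := hB
  obtain ⟨hiso, hmatch⟩ := count_main hcubic hcard h2B h2W
  -- an equivalence between the two sides
  have hcardBW : Fintype.card ↥B = Fintype.card ↥Bᶜ := by
    have h1 := Set.ncard_add_ncard_compl B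
    have h0 : Nat.card V = Fintype.card V := Nat.card_eq_fintype_card
    have h2 : B.ncard = Bᶜ.ncard := by omega
    rw [← Nat.card_coe_set_eq, ← Nat.card_coe_set_eq] at h2
    simpa [Nat.card_eq_fintype_card] using h2
  let e : ↥B ≃ ↥Bᶜ := Fintype.equivOfCardEq hcardBW
  let p : Equiv.Perm ↥B := Function.Involutive.toPerm _ (matchFn_invol h2B)
  let q : Equiv.Perm ↥Bᶜ := Function.Involutive.toPerm _ (matchFn_invol h2W)
  have hpcoe : ⇑p = matchFn G B := rfl
  have hqcoe : ⇑q = matchFn G Bᶜ := rfl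
  have hp : ∀ x, p (p x) = x := fun x => matchFn_invol h2B x
  have hq : ∀ x, q (q x) = x := fun x => matchFn_invol h2W x
  have hsc : p.support.card = q.support.card := by
    rw [show p = Function.Involutive.toPerm _ (matchFn_invol h2B) from rfl,
      show q = Function.Involutive.toPerm _ (matchFn_invol h2W) from rfl,
      support_card h2B, support_card h2W]
    exact hmatch
  obtain ⟨φ, hφ⟩ := invol_conj e p q hp hq hsc
  have hφ' : ∀ x, φ (matchFn G B x) = matchFn G Bᶜ (φ x) := hφ
  have hmap : ∀ a b : ↥B, (G.induce Bᶜ).Adj (φ a) (φ b) ↔ (G.induce B).Adj a b := by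
    intro a b
    show G.Adj ↑(φ a) ↑(φ b) ↔ G.Adj ↑a ↑b
    rw [matchFn_adj_iff h2W, matchFn_adj_iff h2B, ← hφ']
    constructor
    · rintro ⟨h1, h2⟩
      exact ⟨φ.injective h1, fun hc => h2 (by rw [hc])⟩
    · rintro ⟨h1, h2⟩
      exact ⟨by rw [h1], fun hc => h2 (φ.injective hc)⟩
  have ψ : G.induce B ≃g G.induce Bᶜ := ⟨φ, by intro a b; exact hmap a b⟩
  refine ⟨hiso, ?_, ⟨ψ⟩⟩
  rw [edge_set_eq h2B, edge_set_eq h2W,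
    Set.ncard_image_of_injective _ (Sym2.map.injective Subtype.val_injective),
    Set.ncard_image_of_injective _ (Sym2.map.injective Subtype.val_injective),
    ← Nat.card_coe_set_eq, ← Nat.card_coe_set_eq]
  exact Nat.card_congr ψ.mapEdgeSet
end

section
/- Every 3-edge-colourable cubic graph admits a 2-bisection. -/
open SimpleGraph

section Aux

variable {V : Type*}

/-- In a graph where every vertex has at most one neighbour, components have ≤ 2 vertices. -/
lemma small_comp {W : Type*} (H : SimpleGraph W)
    (huniq : ∀ ⦃v u w : W⦄, H.Adj v u → H.Adj v w → u = w) :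
    ∀ c : H.ConnectedComponent, c.supp.ncard ≤ 2 := by
  have hwalk : ∀ {a u : W} (_ : H.Walk a u), u = a ∨ H.Adj a u := by
    intro a u p
    induction p with
    | nil => exact Or.inl rfl
    | @cons a x u h q ih =>
      rcases ih with rfl | h2
      · exact Or.inr h
      · exact Or.inl (huniq h2 h.symm)
  intro c
  induction c using SimpleGraph.ConnectedComponent.ind with
  | _ v =>
  by_cases hn : ∃ w, H.Adj v w
  · obtain ⟨w, hw⟩ := hn
    have hsub : (H.connectedComponentMk v).supp ⊆ {v, w} := by
      intro u hu
      rw [ConnectedComponent.mem_supp_iff, ConnectedComponent.eq] at hu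
      obtain ⟨p⟩ := hu.symm
      rcases hwalk p with rfl | h2
      · exact Set.mem_insert _ _
      · exact Set.mem_insert_iff.mpr (Or.inr (by simp [huniq h2 hw]))
    calc ((H.connectedComponentMk v).supp).ncard ≤ ({v, w} : Set W).ncard :=
          Set.ncard_le_ncard hsub (Set.toFinite _)
      _ ≤ 2 := by
          refine le_trans (Set.ncard_insert_le _ _) ?_
          simp [Set.ncard_singleton]
  · have hsub : (H.connectedComponentMk v).supp ⊆ {v} := by
      intro u hu
      rw [ConnectedComponent.mem_supp_iff, ConnectedComponent.eq] at hu
      obtain ⟨p⟩ := hu.symm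
      rcases hwalk p with rfl | h2
      · exact Set.mem_singleton _
      · exact absurd ⟨u, h2⟩ hn
    refine le_trans (Set.ncard_le_ncard hsub (Set.toFinite _)) (by simp)

variable (f0 f1 : V → V) (h0 : ∀ v, f0 (f0 v) = v) (h1 : ∀ v, f1 (f1 v) = v)

/-- The alternating-step permutation on `V × Bool`. -/
def TT : Equiv.Perm (V × Bool) where
  toFun p := (cond p.2 (f1 p.1) (f0 p.1), !p.2)
  invFun p := (cond p.2 (f0 p.1) (f1 p.1), !p.2)
  left_inv := by rintro ⟨v, (_|_)⟩ <;> simp [h0, h1]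
  right_inv := by rintro ⟨v, (_|_)⟩ <;> simp [h0, h1]

lemma TT_apply (v : V) (b : Bool) :
    TT f0 f1 h0 h1 (v, b) = (cond b (f1 v) (f0 v), !b) := rfl

lemma TT_symm_apply (v : V) (b : Bool) :
    (TT f0 f1 h0 h1).symm (v, b) = (cond b (f0 v) (f1 v), !b) := rfl

lemma TT_sec : ∀ (n : ℕ) (v : V) (b : Bool),
    (((TT f0 f1 h0 h1) ^ n) (v, b)).2 = xor n.bodd b := by
  intro n
  induction n with
  | zero => intro v b; simp
  | succ n ih =>
    intro v b
    rw [pow_succ', Equiv.Perm.mul_apply, TT_apply, ih, Nat.bodd_succ]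
    cases hx : n.bodd <;> cases b <;> simp [hx]

lemma TT_odd (hn0 : ∀ v, f0 v ≠ v) (hn1 : ∀ v, f1 v ≠ v) :
    ∀ (m : ℕ) (v : V) (b : Bool),
    ((TT f0 f1 h0 h1) ^ (2 * m + 1)) (v, b) ≠ (v, !b) := by
  set T := TT f0 f1 h0 h1 with hT
  intro m
  induction m with
  | zero =>
    intro v b h
    rw [pow_one, hT, TT_apply] at h
    have := congrArg Prod.fst h
    cases b
    · exact hn0 v this
    · exact hn1 v this
  | succ m ih =>
    intro v b h
    have e : 2 * (m + 1) + 1 = 1 + (2 * m + 1 + 1) := by ring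
    rw [e, pow_add, pow_add, pow_one] at h
    have key : (T ^ (2 * m + 1)) (T (v, b)) = T.symm (v, !b) := by
      have := congrArg T.symm h
      simpa [Equiv.Perm.mul_apply] using this
    rw [hT, TT_apply, TT_symm_apply] at key
    have hc : cond (!b) (f0 v) (f1 v) = cond b (f1 v) (f0 v) := by cases b <;> rfl
    rw [hc] at key
    exact ih (cond b (f1 v) (f0 v)) (!b) key

lemma TT_no_same (hn0 : ∀ v, f0 v ≠ v) (hn1 : ∀ v, f1 v ≠ v) (v : V) (b : Bool) :
    ¬ (TT f0 f1 h0 h1).SameCycle (v, b) (v, !b) := by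
  set T := TT f0 f1 h0 h1 with hT
  rintro ⟨n, hn⟩
  have oddcase : ∀ (m : ℕ) (w : V) (c : Bool), (T ^ m) (w, c) = (w, !c) → False := by
    intro m w c hm
    have hsec := TT_sec f0 f1 h0 h1 m w c
    rw [hm] at hsec
    have hbodd : m.bodd = true := by
      cases hx : m.bodd <;> rw [hx] at hsec <;> cases c <;> simp_all
    have : Odd m := Nat.odd_iff.mpr (by rw [Nat.mod_two_of_bodd, hbodd]; rfl)
    obtain ⟨k, hk⟩ := this
    exact TT_odd f0 f1 h0 h1 hn0 hn1 k w c (by rw [← hk]; exact hm)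
  rcases n with m | m
  · exact oddcase m v b (by rw [← zpow_natCast]; exact_mod_cast hn)
  · have h1' : (T ^ (m + 1))⁻¹ (v, b) = (v, !b) := by
      rw [← zpow_negSucc]; exact hn
    have h2' : (T ^ (m + 1)) (v, !b) = (v, b) := by
      have := congrArg (T ^ (m + 1)) h1'
      rw [Equiv.Perm.coe_inv, Equiv.apply_symm_apply] at this
      rw [← this]
    exact oddcase (m + 1) v (!b) (by rw [h2', Bool.not_not])

theorem aux_bisection [Fintype V] (G : SimpleGraph V)
    (f0 f1 f2 : V → V)
    (h0 : ∀ v, f0 (f0 v) = v) (h1 : ∀ v, f1 (f1 v) = v)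
    (hn0 : ∀ v, f0 v ≠ v) (hn1 : ∀ v, f1 v ≠ v)
    (hadj : ∀ u w, G.Adj u w → w = f0 u ∨ w = f1 u ∨ w = f2 u) :
    ∃ B : Set V, IsKBisection G 2 B := by
  classical
  set T := TT f0 f1 h0 h1 with hT
  set R : Equiv.Perm (V × Bool) :=
    ⟨fun p => (p.1, !p.2), fun p => (p.1, !p.2), by rintro ⟨v, b⟩; simp, by rintro ⟨v, b⟩; simp⟩
    with hR
  have hRapp : ∀ p : V × Bool, R p = (p.1, !p.2) := fun p => rfl
  have hRinvapp : ∀ p : V × Bool, R⁻¹ p = (p.1, !p.2) := fun p => rfl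
  have hconj : R * T * R⁻¹ = T⁻¹ := by
    apply Equiv.ext
    rintro ⟨v, b⟩
    show R (T (R⁻¹ (v, b))) = T.symm (v, b)
    rw [hRinvapp, hT, TT_apply, hRapp, TT_symm_apply]
    cases b <;> rfl
  have hwd : ∀ x y : V × Bool, T.SameCycle x y →
      T.SameCycle (x.1, !x.2) (y.1, !y.2) := by
    intro x y hxy
    have := hxy.conj (g := R)
    rw [hconj, Equiv.Perm.sameCycle_inv] at this
    simpa [hRapp] using this
  let s1 : Setoid (V × Bool) :=
    ⟨T.SameCycle, ⟨fun x => Equiv.Perm.SameCycle.refl T x, fun h => h.symm,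
      fun h h' => h.trans h'⟩⟩
  let Q := Quotient s1
  let Rb : Q → Q := Quotient.map (fun p : V × Bool => (p.1, !p.2)) hwd
  have hRbmk : ∀ p : V × Bool, Rb (Quotient.mk s1 p) = Quotient.mk s1 (p.1, !p.2) :=
    fun p => rfl
  have hRbinv : ∀ q : Q, Rb (Rb q) = q := by
    intro q
    induction q using Quotient.ind with
    | _ p => rw [hRbmk, hRbmk]; simp
  have hRbne : ∀ q : Q, Rb q ≠ q := by
    intro q
    induction q using Quotient.ind with
    | _ p =>
      rw [hRbmk]
      intro hcon
      exact TT_no_same f0 f1 h0 h1 hn0 hn1 p.1 p.2 (Quotient.exact hcon).symm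
  let s2 : Setoid Q :=
    ⟨fun q q' => q = q' ∨ q = Rb q', by
      refine ⟨fun q => Or.inl rfl, ?_, ?_⟩
      · rintro q q' (rfl | h)
        · exact Or.inl rfl
        · exact Or.inr (by rw [h, hRbinv])
      · rintro q q' q'' (rfl | h) (rfl | h')
        · exact Or.inl rfl
        · exact Or.inr h'
        · exact Or.inr h
        · exact Or.inl (by rw [h, h', hRbinv])⟩
  let A : Set Q := {q | (Quotient.mk s2 q).out = q}
  have hmkR : ∀ q : Q, Quotient.mk s2 (Rb q) = Quotient.mk s2 q :=
    fun q => Quotient.sound (Or.inr rfl)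
  have hA : ∀ q : Q, Rb q ∈ A ↔ q ∉ A := by
    intro q
    have hout : (Quotient.mk s2 q).out = q ∨ (Quotient.mk s2 q).out = Rb q :=
      Quotient.mk_out (s := s2) q
    have hmem : q ∈ A ↔ (Quotient.mk s2 q).out = q := Iff.rfl
    have hmem' : Rb q ∈ A ↔ (Quotient.mk s2 q).out = Rb q := by
      show (Quotient.mk s2 (Rb q)).out = Rb q ↔ _
      rw [hmkR]
    rcases hout with h | h
    · rw [hmem, hmem']
      constructor
      · intro h'; rw [h] at h'; exact absurd h'.symm (hRbne q)
      · intro h'; exact absurd h h'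
    · rw [hmem, hmem', h]
      constructor
      · intro _ h'; exact hRbne q h' 
      · intro _; rfl
  let B : Set V := {v | Quotient.mk s1 (v, false) ∈ A}
  have hstep0 : ∀ v : V, Quotient.mk s1 (f0 v, true) = Quotient.mk s1 (v, false) := by
    intro v
    refine (Quotient.sound ?_).symm
    exact ⟨1, by rw [zpow_one]; rfl⟩
  have hstep1 : ∀ v : V, Quotient.mk s1 (f1 v, false) = Quotient.mk s1 (v, true) := by
    intro v
    refine (Quotient.sound ?_).symm
    exact ⟨1, by rw [zpow_one]; rfl⟩
  have hswap0 : ∀ v : V, f0 v ∈ B ↔ v ∉ B := by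
    intro v
    show Quotient.mk s1 (f0 v, false) ∈ A ↔ ¬ (Quotient.mk s1 (v, false) ∈ A)
    have : Quotient.mk s1 (f0 v, false) = Rb (Quotient.mk s1 (v, false)) := by
      rw [← hstep0 v, hRbmk]
      rfl
    rw [this]
    exact hA _
  have hswap1 : ∀ v : V, f1 v ∈ B ↔ v ∉ B := by
    intro v
    show Quotient.mk s1 (f1 v, false) ∈ A ↔ ¬ (Quotient.mk s1 (v, false) ∈ A)
    have : Quotient.mk s1 (f1 v, false) = Rb (Quotient.mk s1 (v, false)) := by
      rw [hRbmk]
      exact hstep1 v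
    rw [this]
    exact hA _
  have hinj0 : Function.Injective f0 := Function.Involutive.injective h0
  have himg : f0 '' B = Bᶜ := by
    ext w
    simp only [Set.mem_image, Set.mem_compl_iff]
    constructor
    · rintro ⟨v, hv, rfl⟩
      exact fun hc => (hswap0 v).mp hc hv
    · intro hw
      exact ⟨f0 w, (hswap0 w).mpr hw, h0 w⟩
  have hcard : 2 * B.ncard = Fintype.card V := by
    have h2 := Set.ncard_add_ncard_compl B
    rw [← himg, Set.ncard_image_of_injective _ hinj0, Nat.card_eq_fintype_card] at h2
    omega
  have hsmall : ∀ S : Set V, (∀ v ∈ S, f0 v ∉ S) → (∀ v ∈ S, f1 v ∉ S) →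
      SmallComponents G S 2 := by
    intro S hS0 hS1
    apply small_comp
    rintro ⟨v, hv⟩ ⟨u, hu⟩ ⟨w, hw⟩ hadj1 hadj2
    have g1 : G.Adj v u := hadj1
    have g2 : G.Adj v w := hadj2
    have e1 : u = f2 v := by
      rcases hadj v u g1 with h | h | h
      · exact absurd (h ▸ hu) (hS0 v hv)
      · exact absurd (h ▸ hu) (hS1 v hv)
      · exact h
    have e2 : w = f2 v := by
      rcases hadj v w g2 with h | h | h
      · exact absurd (h ▸ hw) (hS0 v hv)
      · exact absurd (h ▸ hw) (hS1 v hv)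
      · exact h
    exact Subtype.ext (e1.trans e2.symm)
  refine ⟨B, hcard, ?_, ?_⟩
  · exact hsmall B (fun v hv hc => (hswap0 v).mp hc hv) (fun v hv hc => (hswap1 v).mp hc hv)
  · exact hsmall Bᶜ (fun v hv hc => hc ((hswap0 v).mpr hv)) (fun v hv hc => hc ((hswap1 v).mpr hv))

end Aux

/-- Every 3-edge-colourable cubic graph admits a 2-bisection. -/
theorem stmt1 {V : Type*} [Fintype V] (G : SimpleGraph V) [DecidableRel G.Adj]
    (hcubic : G.IsRegularOfDegree 3)
    (hcol : ∃ c : G.edgeSet → Fin 3, ∀ e f : G.edgeSet, e ≠ f →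
      (∃ v : V, v ∈ e.1 ∧ v ∈ f.1) → c e ≠ c f) :
    ∃ B : Set V, IsKBisection G 2 B := by
  classical
  obtain ⟨c, hc⟩ := hcol
  have key : ∀ (i : Fin 3) (v : V), ∃! w : V, ∃ h : G.Adj v w,
      c ⟨s(v, w), G.mem_edgeSet.mpr h⟩ = i := by
    intro i v
    have hcardn : Fintype.card (G.neighborFinset v) = 3 := by
      rw [Fintype.card_coe]
      exact hcubic v
    have hmemadj : ∀ w : G.neighborFinset v, G.Adj v w := by
      intro w
      have := w.2
      rwa [SimpleGraph.mem_neighborFinset] at this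
    let F : G.neighborFinset v → Fin 3 := fun w =>
      c ⟨s(v, (w : V)), G.mem_edgeSet.mpr (hmemadj w)⟩
    have hFinj : Function.Injective F := by
      intro w1 w2 hF
      by_contra hne
      have hval : (w1 : V) ≠ (w2 : V) := fun h => hne (Subtype.ext h)
      refine hc ⟨s(v, (w1 : V)), G.mem_edgeSet.mpr (hmemadj w1)⟩
        ⟨s(v, (w2 : V)), G.mem_edgeSet.mpr (hmemadj w2)⟩ ?_ ?_ hF
      · intro h
        exact hval (Sym2.congr_right.mp (congrArg Subtype.val h))
      · exact ⟨v, Sym2.mem_mk_left _ _, Sym2.mem_mk_left _ _⟩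
    have hFbij : Function.Bijective F :=
      (Fintype.bijective_iff_injective_and_card F).mpr ⟨hFinj, by rw [hcardn, Fintype.card_fin]⟩
    obtain ⟨w, hw⟩ := hFbij.2 i
    refine ⟨(w : V), ⟨hmemadj w, hw⟩, ?_⟩
    rintro y ⟨hy, hcy⟩
    have hyw : (⟨y, show y ∈ G.neighborFinset v by rwa [SimpleGraph.mem_neighborFinset]⟩ : G.neighborFinset v) = w :=
      hFinj (hcy.trans hw.symm)
    exact congrArg Subtype.val hyw
  choose f hf hu using key
  have hadjf : ∀ (i : Fin 3) (v : V), G.Adj v (f i v) := fun i v => (hf i v).choose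
  have hcolf : ∀ (i : Fin 3) (v : V),
      c ⟨s(v, f i v), G.mem_edgeSet.mpr (hadjf i v)⟩ = i := fun i v => (hf i v).choose_spec
  have hinv : ∀ (i : Fin 3) (v : V), f i (f i v) = v := by
    intro i v
    have hadj2 : G.Adj (f i v) v := (hadjf i v).symm
    have hcv : c ⟨s(f i v, v), G.mem_edgeSet.mpr hadj2⟩ = i := by
      rw [show (⟨s(f i v, v), G.mem_edgeSet.mpr hadj2⟩ : G.edgeSet)
          = ⟨s(v, f i v), G.mem_edgeSet.mpr (hadjf i v)⟩ from Subtype.ext Sym2.eq_swap]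
      exact hcolf i v
    exact (hu i (f i v) v ⟨hadj2, hcv⟩).symm
  have hne : ∀ (i : Fin 3) (v : V), f i v ≠ v := fun i v => (hadjf i v).ne'
  have hadj3 : ∀ u w, G.Adj u w → w = f 0 u ∨ w = f 1 u ∨ w = f 2 u := by
    intro u w h
    have hiw : ∀ i : Fin 3, c ⟨s(u, w), G.mem_edgeSet.mpr h⟩ = i → w = f i u :=
      fun i hci => hu i u w ⟨h, hci⟩
    have h3 : ∀ j : Fin 3, j = 0 ∨ j = 1 ∨ j = 2 := by decide
    rcases h3 (c ⟨s(u, w), G.mem_edgeSet.mpr h⟩) with hj | hj | hj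
    · exact Or.inl (hiw 0 hj)
    · exact Or.inr (Or.inl (hiw 1 hj))
    · exact Or.inr (Or.inr (hiw 2 hj))
  exact aux_bisection G (f 0) (f 1) (f 2) (hinv 0) (hinv 1) (hne 0) (hne 1) hadj3
end

section
/- For a permutation p of {0,...,n-1}, the cycle permutation graphs C(n,p) and C(n,p̄) are isomorphic, where p̄ is defined by p̄(i) = n − p(i) (mod n). -/
open SimpleGraph

/-- The cycle permutation graph `C(n,p)`: two disjoint `n`-cycles on `u_0,…,u_{n-1}`
(the `Sum.inl` vertices) and `v_0,…,v_{n-1}` (the `Sum.inr` vertices), together with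
the matching edges `v_i u_{p(i)}`. -/
def cyclePerm (n : ℕ) (p : Equiv.Perm (Fin n)) : SimpleGraph (Fin n ⊕ Fin n) :=
  SimpleGraph.fromRel (fun a b =>
    match a, b with
    | .inl i, .inl j => j.val = (i.val + 1) % n
    | .inr i, .inr j => j.val = (i.val + 1) % n
    | .inr i, .inl j => j = p i
    | _, _ => False)

lemma succ_iff {n : ℕ} [NeZero n] (hn : 1 < n) (i j : Fin n) :
    j.val = (i.val + 1) % n ↔ j = i + 1 := by
  rw [Fin.ext_iff, Fin.val_add, Fin.val_one' n, Nat.mod_eq_of_lt hn]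

/-- `C(n,p)` and `C(n,p̄)` are isomorphic, where `p̄(i) = n - p(i) (mod n) = -p(i)`. -/
theorem stmt3 (n : ℕ) (hn : 4 ≤ n) (p : Equiv.Perm (Fin n)) :
    Nonempty (cyclePerm n p ≃g cyclePerm n (p.trans (Equiv.neg (Fin n)))) := by
  have : NeZero n := ⟨by omega⟩
  have h1 : 1 < n := by omega
  letI : CommRing (Fin n) := Fin.instCommRing n
  refine ⟨⟨Equiv.sumCongr (Equiv.neg (Fin n)) (Equiv.refl _), ?_⟩⟩
  rintro (i | i) (j | j) <;>
    simp only [cyclePerm, Equiv.sumCongr_apply, Sum.map_inl, Sum.map_inr, Equiv.neg_apply,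
      Equiv.refl_apply, fromRel_adj, ne_eq, Sum.inl.injEq, Sum.inr.injEq, Equiv.trans_apply,
      Sum.inl_ne_inr, Sum.inr_ne_inl, not_false_iff, true_and, neg_inj, or_false, false_or]
  · rw [succ_iff h1, succ_iff h1, succ_iff h1, succ_iff h1]
    constructor
    · rintro ⟨hne, h | h⟩
      · exact ⟨hne, Or.inr (by linear_combination h)⟩
      · exact ⟨hne, Or.inl (by linear_combination h)⟩
    · rintro ⟨hne, h | h⟩
      · exact ⟨hne, Or.inr (by linear_combination h)⟩
      · exact ⟨hne, Or.inl (by linear_combination h)⟩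
end

section
/- If n is even, then for every permutation p of {0,...,n-1} the cycle permutation graph C(n,p) admits a 2-bisection. -/
open SimpleGraph

/-- Taking successor mod `n` flips parity when `n` is even. -/
lemma flip_parity {n i : ℕ} (hn : 2 ≤ n) (heven : Even n) (hi : i < n) :
    (i + 1) % n % 2 ≠ i % 2 := by
  obtain ⟨k, hk⟩ := heven
  rcases Nat.lt_or_ge (i + 1) n with h | h
  · rw [Nat.mod_eq_of_lt h]; omega
  · have : i + 1 = n := by omega
    rw [this, Nat.mod_self]; omega

/-- In a graph of maximum degree at most one, any walk from `v` ends at `v`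
or at a neighbour of `v`. -/
lemma walk_claim {W : Type*} {H : SimpleGraph W}
    (hd : ∀ v a b : W, H.Adj v a → H.Adj v b → a = b) :
    ∀ {v x : W}, H.Walk v x → (x = v ∨ H.Adj v x) := by
  intro v x w
  induction w with
  | nil => left; rfl
  | @cons a b c hab q ih =>
    rcases ih with rfl | h
    · right; exact hab
    · left; exact hd b _ _ h hab.symm

/-- In a graph of maximum degree at most one, every connected component has at most
two vertices. -/
lemma supp_le_two {W : Type*} {H : SimpleGraph W}
    (hd : ∀ v a b : W, H.Adj v a → H.Adj v b → a = b)
    (c : H.ConnectedComponent) : c.supp.ncard ≤ 2 := by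
  induction c using SimpleGraph.ConnectedComponent.ind with
  | _ v =>
    by_cases hw : ∃ w, H.Adj v w
    · obtain ⟨w, hw⟩ := hw
      have hsub : (H.connectedComponentMk v).supp ⊆ {v, w} := by
        intro x hx
        rw [SimpleGraph.ConnectedComponent.mem_supp_iff,
          SimpleGraph.ConnectedComponent.eq] at hx
        obtain ⟨wlk⟩ := hx.symm
        rcases walk_claim hd wlk with rfl | h
        · exact Set.mem_insert _ _
        · have : x = w := hd v x w h hw
          subst this; exact Set.mem_insert_of_mem _ rfl
      calc (H.connectedComponentMk v).supp.ncard ≤ ({v, w} : Set W).ncard :=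
            Set.ncard_le_ncard hsub ((Set.finite_singleton w).insert v)
        _ ≤ 2 := le_of_eq (Set.ncard_pair hw.ne)
    · have hsub : (H.connectedComponentMk v).supp ⊆ {v} := by
        intro x hx
        rw [SimpleGraph.ConnectedComponent.mem_supp_iff,
          SimpleGraph.ConnectedComponent.eq] at hx
        obtain ⟨wlk⟩ := hx.symm
        rcases walk_claim hd wlk with rfl | h
        · exact rfl
        · exact absurd ⟨x, h⟩ hw
      calc (H.connectedComponentMk v).supp.ncard ≤ ({v} : Set W).ncard :=
            Set.ncard_le_ncard hsub (Set.finite_singleton v)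
        _ ≤ 2 := by rw [Set.ncard_singleton]; omega

lemma adj_unfold (n : ℕ) (p : Equiv.Perm (Fin n)) (x y : Fin n ⊕ Fin n) :
    (cyclePerm n p).Adj x y ↔ x ≠ y ∧
      ((match x, y with
        | .inl i, .inl j => j.val = (i.val + 1) % n
        | .inr i, .inr j => j.val = (i.val + 1) % n
        | .inr i, .inl j => j = p i
        | _, _ => False) ∨
       (match y, x with
        | .inl i, .inl j => j.val = (i.val + 1) % n
        | .inr i, .inr j => j.val = (i.val + 1) % n
        | .inr i, .inl j => j = p i
        | _, _ => False)) := SimpleGraph.fromRel_adj _ x y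

/-- If a set `s` contains no pair of cyclically consecutive vertices on either cycle,
then all components it induces in `C(n,p)` have at most two vertices. -/
lemma small_of_nosame (n : ℕ) (p : Equiv.Perm (Fin n)) (s : Set (Fin n ⊕ Fin n))
    (h1 : ∀ i j : Fin n, Sum.inl i ∈ s → Sum.inl j ∈ s → j.val ≠ (i.val + 1) % n)
    (h2 : ∀ i j : Fin n, Sum.inr i ∈ s → Sum.inr j ∈ s → j.val ≠ (i.val + 1) % n) :
    SmallComponents (cyclePerm n p) s 2 := by
  intro c
  apply supp_le_two
  rintro ⟨v, hv⟩ ⟨a, ha⟩ ⟨b, hb⟩ hva hvb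
  have hva' : (cyclePerm n p).Adj v a := hva
  have hvb' : (cyclePerm n p).Adj v b := hvb
  clear hva hvb
  apply Subtype.ext
  show a = b
  have key : ∀ x : Fin n ⊕ Fin n, x ∈ s → (cyclePerm n p).Adj v x →
      x = (match v with | .inl j => Sum.inr (p.symm j) | .inr i => Sum.inl (p i)) := by
    intro x hx hadj
    rw [adj_unfold] at hadj
    match v, x with
    | .inl j, .inl k =>
      rcases hadj.2 with h | h
      · exact absurd h (h1 j k hv hx)
      · exact absurd h (h1 k j hx hv)
    | .inl j, .inr i =>
      rcases hadj.2 with h | h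
      · exact h.elim
      · show Sum.inr i = Sum.inr (p.symm j)
        have h' : j = p i := h
        rw [h', Equiv.symm_apply_apply]
    | .inr i, .inl k =>
      rcases hadj.2 with h | h
      · simp only [Sum.inl.injEq]; exact h
      · exact h.elim
    | .inr i, .inr k =>
      rcases hadj.2 with h | h
      · exact absurd h (h2 i k hv hx)
      · exact absurd h (h2 k i hx hv)
  exact (key a ha hva').trans (key b hb hvb').symm

/-- If `n` is even, the cycle permutation graph `C(n,p)` admits a 2-bisection. -/
theorem stmt5 (n : ℕ) (hn : 4 ≤ n) (heven : Even n) (p : Equiv.Perm (Fin n)) :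
    ∃ B : Set (Fin n ⊕ Fin n), IsKBisection (cyclePerm n p) 2 B := by
  haveI : NeZero n := ⟨by omega⟩
  set B : Set (Fin n ⊕ Fin n) :=
    {x | Sum.elim (fun i : Fin n => i.val) (fun i : Fin n => i.val) x % 2 = 0} with hB
  have hflip : ∀ i : Fin n, ((i + 1 : Fin n) : ℕ) % 2 ≠ (i : ℕ) % 2 := by
    intro i
    have h1 : ((1 : Fin n) : ℕ) = 1 := by
      rw [Fin.val_one']; exact Nat.mod_eq_of_lt (by omega)
    rw [Fin.val_add, h1]
    exact flip_parity (by omega) heven i.isLt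
  refine ⟨B, ?_, ?_, ?_⟩
  · -- cardinality
    set e : (Fin n ⊕ Fin n) ≃ (Fin n ⊕ Fin n) :=
      Equiv.sumCongr (Equiv.addRight (1 : Fin n)) (Equiv.addRight (1 : Fin n)) with he
    have himg : e '' B = Bᶜ := by
      ext x
      rw [Set.mem_image]
      constructor
      · rintro ⟨y, hy, rfl⟩
        cases y with
        | inl i =>
          have hy' : (i : ℕ) % 2 = 0 := hy
          show ¬ ((i + 1 : Fin n) : ℕ) % 2 = 0
          have := hflip i; omega
        | inr i =>
          have hy' : (i : ℕ) % 2 = 0 := hy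
          show ¬ ((i + 1 : Fin n) : ℕ) % 2 = 0
          have := hflip i; omega
      · intro hx
        cases x with
        | inl j =>
          refine ⟨Sum.inl (j - 1), ?_, ?_⟩
          · have hx' : ¬ (j : ℕ) % 2 = 0 := hx
            show ((j - 1 : Fin n) : ℕ) % 2 = 0
            have := hflip (j - 1)
            rw [sub_add_cancel] at this
            omega
          · show Sum.inl (j - 1 + 1) = Sum.inl j
            rw [sub_add_cancel]
        | inr j =>
          refine ⟨Sum.inr (j - 1), ?_, ?_⟩
          · have hx' : ¬ (j : ℕ) % 2 = 0 := hx
            show ((j - 1 : Fin n) : ℕ) % 2 = 0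
            have := hflip (j - 1)
            rw [sub_add_cancel] at this
            omega
          · show Sum.inr (j - 1 + 1) = Sum.inr j
            rw [sub_add_cancel]
    have h1 := Set.ncard_add_ncard_compl B
    have h2 : Bᶜ.ncard = B.ncard := by
      rw [← himg, Set.ncard_image_of_injective _ e.injective]
    rw [Nat.card_eq_fintype_card] at h1
    omega
  · -- components of B
    apply small_of_nosame
    · intro i j hi hj
      have hi' : (i : ℕ) % 2 = 0 := hi
      have hj' : (j : ℕ) % 2 = 0 := hj
      have := flip_parity (n := n) (i := i) (by omega) heven i.isLt
      omega
    · intro i j hi hj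
      have hi' : (i : ℕ) % 2 = 0 := hi
      have hj' : (j : ℕ) % 2 = 0 := hj
      have := flip_parity (n := n) (i := i) (by omega) heven i.isLt
      omega
  · -- components of Bᶜ
    apply small_of_nosame
    · intro i j hi hj
      have hi' : ¬ (i : ℕ) % 2 = 0 := hi
      have hj' : ¬ (j : ℕ) % 2 = 0 := hj
      have := flip_parity (n := n) (i := i) (by omega) heven i.isLt
      omega
    · intro i j hi hj
      have hi' : ¬ (i : ℕ) % 2 = 0 := hi
      have hj' : ¬ (j : ℕ) % 2 = 0 := hj
      have := flip_parity (n := n) (i := i) (by omega) heven i.isLt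
      omega
end

section
/- The Petersen graph admits a 4-bisection such that the two induced monochromatic subgraphs are isomorphic linear forests. -/
open SimpleGraph

/-- The Petersen graph as the Kneser graph K(5,2): vertices are the 2-element subsets
of a 5-element set, adjacent iff disjoint. -/
def petersen : SimpleGraph {s : Finset (Fin 5) // s.card = 2} where
  Adj a b := Disjoint a.1 b.1
  symm := ⟨fun a b h => h.symm⟩
  loopless := ⟨fun a h => by
    have h2 := a.2
    have h3 : Disjoint a.1 a.1 := h
    rw [disjoint_self] at h3
    simp [h3] at h2⟩

abbrev PV := {s : Finset (Fin 5) // s.card = 2}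

instance petersenAdjDec : DecidableRel petersen.Adj :=
  fun a b => inferInstanceAs (Decidable (Disjoint a.1 b.1))

section BridgeDec
variable {V : Type*} [Fintype V] [DecidableEq V] (G : SimpleGraph V) [DecidableRel G.Adj]

instance myDelAdj (e : Sym2 V) : DecidableRel (G \ fromEdgeSet {e}).Adj := fun a b =>
  decidable_of_iff (G.Adj a b ∧ s(a,b) ≠ e) (by
    simp only [sdiff_adj, fromEdgeSet_adj, Set.mem_singleton_iff, not_and]
    constructor
    · rintro ⟨h, hne⟩; exact ⟨h, fun he _ => hne he⟩
    · rintro ⟨h, hf⟩; exact ⟨h, fun he => hf he h.ne⟩)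

instance myBridgeDec (e : Sym2 V) : Decidable (G.IsBridge e) :=
  Quot.recOnSubsingleton e (fun p => decidable_of_iff _ (isBridge_iff (u := p.1) (v := p.2)).symm)
end BridgeDec

def bf : Finset PV := Finset.univ.filter (fun v =>
  v.1 = {0,1} ∨ v.1 = {0,2} ∨ v.1 = {0,3} ∨ v.1 = {1,2} ∨ v.1 = {1,4})

def sigma5 : Equiv.Perm (Fin 5) := ⟨![3,4,2,1,0], ![4,3,2,0,1], by decide, by decide⟩

def sigmaPV : PV ≃ PV where
  toFun v := ⟨v.1.image sigma5, by rw [Finset.card_image_of_injective _ sigma5.injective, v.2]⟩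
  invFun v := ⟨v.1.image sigma5.symm, by rw [Finset.card_image_of_injective _ sigma5.symm.injective, v.2]⟩
  left_inv v := Subtype.ext (by simp [Finset.image_image])
  right_inv v := Subtype.ext (by simp [Finset.image_image])

theorem stmt8' : True := trivial

/-- The Petersen graph admits a 4-bisection such that the two induced monochromatic
subgraphs are isomorphic linear forests. -/
theorem stmt8 : ∃ B : Set {s : Finset (Fin 5) // s.card = 2},
    IsKBisection petersen 4 B ∧
    Nonempty (petersen.induce B ≃g petersen.induce Bᶜ) ∧
    IsLinearForest (petersen.induce B) ∧ IsLinearForest (petersen.induce Bᶜ) := by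
  classical
  use (↑bf : Set PV)
  have hcompl : ((↑bf : Set PV))ᶜ = ↑(bfᶜ) := by rw [Finset.coe_compl]
  refine ⟨⟨?_, ?_, ?_⟩, ?_, ?_, ?_⟩
  · rw [Set.ncard_coe_finset]
    decide
  · intro c
    rw [Set.ncard_eq_toFinset_card']
    revert c
    decide
  · rw [hcompl]
    intro c
    rw [Set.ncard_eq_toFinset_card']
    revert c
    decide
  · refine ⟨⟨Equiv.subtypeEquiv sigmaPV (fun v => ?_), fun {a b} => ?_⟩⟩
    · simp only [Set.mem_compl_iff, Finset.mem_coe]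
      revert v
      decide
    · exact Finset.disjoint_image (s := a.1.1) (t := b.1.1) sigma5.injective
  · constructor
    · rw [isAcyclic_iff_forall_adj_isBridge]
      decide
    · intro v
      rw [Set.ncard_eq_toFinset_card']
      revert v
      decide
  · rw [hcompl]
    constructor
    · rw [isAcyclic_iff_forall_adj_isBridge]
      decide
    · intro v
      rw [Set.ncard_eq_toFinset_card']
      revert v
      decide
end

section
/- If a cubic graph G admits a bisection whose two induced monochromatic subgraphs are isomorphic, then G admits a bisection whose two induced monochromatic subgraphs are isomorphic and each has maximum degree at most 2. -/
open SimpleGraph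

private lemma aux_induce_nbr {V : Type*} (G : SimpleGraph V) (B : Set V) (x : ↥B) :
    ((G.induce B).neighborSet x).ncard = (G.neighborSet (↑x : V) ∩ B).ncard := by
  have h : G.neighborSet (↑x : V) ∩ B = Subtype.val '' ((G.induce B).neighborSet x) := by
    ext u
    constructor
    · rintro ⟨hadj, hu⟩
      exact ⟨⟨u, hu⟩, by simpa using hadj, rfl⟩
    · rintro ⟨⟨u', hu'⟩, hadj, rfl⟩
      exact ⟨by simpa using hadj, hu'⟩
  rw [h, Set.ncard_image_of_injective _ Subtype.val_injective]

private lemma aux_iso_nbr {V : Type*} (G : SimpleGraph V) {B C : Set V}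
    (φ : G.induce B ≃g G.induce C) (x : ↥B) :
    (G.neighborSet (↑(φ x) : V) ∩ C).ncard = (G.neighborSet (↑x : V) ∩ B).ncard := by
  rw [← aux_induce_nbr, ← aux_induce_nbr, ← Nat.card_coe_set_eq, ← Nat.card_coe_set_eq]
  exact Nat.card_congr (φ.mapNeighborSet x).symm

private lemma aux_nbr_card {V : Type*} [Fintype V] (G : SimpleGraph V) [DecidableRel G.Adj]
    (hcubic : G.IsRegularOfDegree 3) (v : V) : (G.neighborSet v).ncard = 3 := by
  have := hcubic v
  simpa [Set.ncard_eq_toFinset_card', SimpleGraph.degree, neighborFinset] using this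

private lemma aux_full {V : Type*} [Fintype V] (G : SimpleGraph V) [DecidableRel G.Adj]
    (hcubic : G.IsRegularOfDegree 3) {B : Set V} {v : V}
    (h3 : (G.neighborSet v ∩ B).ncard = 3) : G.neighborSet v ⊆ B := by
  have hns : (G.neighborSet v).ncard = 3 := aux_nbr_card G hcubic v
  have heq : G.neighborSet v ∩ B = G.neighborSet v :=
    Set.eq_of_subset_of_ncard_le Set.inter_subset_left (by rw [h3, hns]) (Set.toFinite _)
  exact Set.inter_eq_left.mp heq

private lemma aux_swap {V : Type*} [Fintype V] (G : SimpleGraph V) [DecidableRel G.Adj]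
    (hcubic : G.IsRegularOfDegree 3) {B : Set V}
    (φ : G.induce B ≃g G.induce Bᶜ) {v : V} (hv : v ∈ B)
    (hnbv : G.neighborSet v ⊆ B) :
    ∃ B' : Set V, B'.ncard = B.ncard ∧ Nonempty (G.induce B' ≃g G.induce B'ᶜ) ∧
      {p : V × V | p.1 ∈ B' ∧ p.2 ∈ B' ∧ G.Adj p.1 p.2}.ncard <
      {p : V × V | p.1 ∈ B ∧ p.2 ∈ B ∧ G.Adj p.1 p.2}.ncard := by
  classical
  set w : V := ↑(φ ⟨v, hv⟩) with hw
  have hwC : w ∈ Bᶜ := (φ ⟨v, hv⟩).2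
  have hwB : w ∉ B := hwC
  have hvw : v ≠ w := fun h => hwB (h ▸ hv)
  have hdegv : (G.neighborSet v ∩ B).ncard = 3 := by
    rw [Set.inter_eq_left.mpr hnbv]; exact aux_nbr_card G hcubic v
  have hdegw : (G.neighborSet w ∩ Bᶜ).ncard = 3 := by
    have htr := aux_iso_nbr G φ ⟨v, hv⟩
    rw [← hw] at htr
    rw [htr, hdegv]
  have hnbw : G.neighborSet w ⊆ Bᶜ := aux_full G hcubic hdegw
  -- facts about φ
  have hφne : ∀ (x : ↥B), (x : V) ≠ v → (↑(φ x) : V) ≠ w := by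
    intro x hx h
    have h1 : φ x = φ ⟨v, hv⟩ := Subtype.ext (h.trans hw)
    exact hx (congrArg Subtype.val (φ.toEquiv.injective h1))
  have hφCne : ∀ (x : ↥(Bᶜ)), (x : V) ≠ w → (↑(φ.symm x) : V) ≠ v := by
    intro x hx h
    have h1 : φ.symm x = φ.symm ⟨w, hwC⟩ := by
      refine Subtype.ext ?_
      rw [h]
      have : (⟨w, hwC⟩ : ↥(Bᶜ)) = φ ⟨v, hv⟩ := Subtype.ext hw
      rw [this, φ.symm_apply_apply]
    exact hx (congrArg Subtype.val (φ.symm.toEquiv.injective h1))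
  -- the global permutation
  let σ : V ≃ V := (Equiv.Set.sumCompl B).symm.trans
    ((Equiv.sumCongr φ.toEquiv φ.symm.toEquiv).trans
      ((Equiv.sumComm _ _).trans (Equiv.Set.sumCompl B)))
  have hσB : ∀ (x : V) (hx : x ∈ B), σ x = ↑(φ ⟨x, hx⟩) := by
    intro x hx
    have h1 : (Equiv.Set.sumCompl B).symm x = Sum.inl ⟨x, hx⟩ :=
      Equiv.Set.sumCompl_symm_apply (x := ⟨x, hx⟩)
    simp [σ, h1]
  have hσC : ∀ (x : V) (hx : x ∉ B), σ x = ↑(φ.symm ⟨x, hx⟩) := by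
    intro x hx
    have h1 := Equiv.Set.sumCompl_symm_apply_of_notMem (s := B) hx
    simp [σ, h1]
  let ρ : V ≃ V := ((Equiv.swap v w).trans σ).trans (Equiv.swap v w)
  have hρw : ρ w = v := by
    have h1 : σ v = w := by rw [hσB v hv]
    simp [ρ, Equiv.swap_apply_right, h1]
  have hρv : ρ v = w := by
    have h1 : σ w = v := by
      rw [hσC w hwB]
      have h2 : (⟨w, hwC⟩ : ↥(Bᶜ)) = φ ⟨v, hv⟩ := Subtype.ext hw
      rw [h2, φ.symm_apply_apply]
    simp [ρ, Equiv.swap_apply_left, h1, Equiv.swap_apply_right]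
  have hρB : ∀ (x : V) (hx : x ∈ B), x ≠ v → ρ x = ↑(φ ⟨x, hx⟩) := by
    intro x hx hxv
    have hxw : x ≠ w := fun h => hwB (h ▸ hx)
    have h1 : (↑(φ ⟨x, hx⟩) : V) ≠ v := fun h => (φ ⟨x, hx⟩).2 (h ▸ hv)
    have h2 : (↑(φ ⟨x, hx⟩) : V) ≠ w := hφne ⟨x, hx⟩ hxv
    simp [ρ, Equiv.swap_apply_of_ne_of_ne hxv hxw, hσB x hx,
      Equiv.swap_apply_of_ne_of_ne h1 h2]
  have hρC : ∀ (x : V) (hx : x ∉ B), x ≠ w → ρ x = ↑(φ.symm ⟨x, hx⟩) := by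
    intro x hx hxw
    have hxv : x ≠ v := fun h => hx (h ▸ hv)
    have h1 : (↑(φ.symm ⟨x, hx⟩) : V) ≠ v := hφCne ⟨x, hx⟩ hxw
    have h2 : (↑(φ.symm ⟨x, hx⟩) : V) ≠ w := fun h => hwB (h ▸ (φ.symm ⟨x, hx⟩).2)
    simp [ρ, Equiv.swap_apply_of_ne_of_ne hxv hxw, hσC x hx,
      Equiv.swap_apply_of_ne_of_ne h1 h2]
  set B' : Set V := insert w (B \ {v}) with hB'
  have hmem1 : ∀ x ∈ B', ρ x ∈ B'ᶜ := by
    rintro x (rfl | ⟨hxB, hxv⟩)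
    · rw [hρw]
      intro hvB'
      rcases hvB' with h | h
      · exact hvw h
      · exact h.2 rfl
    · simp only [Set.mem_singleton_iff] at hxv
      rw [hρB x hxB hxv]
      intro hmem
      rcases hmem with h | h
      · exact hφne ⟨x, hxB⟩ hxv h
      · exact (φ ⟨x, hxB⟩).2 h.1
  have hmem2 : ∀ x, x ∉ B' → ρ x ∈ B' := by
    intro x hx
    simp only [hB', Set.mem_insert_iff, Set.mem_diff, Set.mem_singleton_iff, not_or,
      not_and, not_not] at hx
    obtain ⟨hxw, hxB⟩ := hx
    by_cases hxv : x = v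
    · subst hxv
      rw [hρv]; exact Or.inl rfl
    · have hxnB : x ∉ B := fun h => hxv (hxB h)
      rw [hρC x hxnB hxw]
      exact Or.inr ⟨(φ.symm ⟨x, hxnB⟩).2, hφCne ⟨x, hxnB⟩ hxw⟩
  have hmem : ∀ x, x ∈ B' ↔ ρ x ∈ B'ᶜ := by
    intro x
    refine ⟨hmem1 x, fun h => ?_⟩
    by_contra hx
    exact h (hmem2 x hx)
  have hwadj : ∀ y, y ∈ B \ {v} → ¬ G.Adj w y ∧ ¬ G.Adj v (ρ y) := by
    intro y hy
    constructor
    · intro hAd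
      exact (hnbw hAd) hy.1
    · rw [hρB y hy.1 hy.2]
      intro hAd
      exact (φ ⟨y, hy.1⟩).2 (hnbv hAd)
  have hadj : ∀ x y, x ∈ B' → y ∈ B' → (G.Adj (ρ x) (ρ y) ↔ G.Adj x y) := by
    intro x y hx hy
    rcases hx with rfl | hx <;> rcases hy with rfl | hy
    · rw [hρw]; simp
    · rw [hρw]
      exact iff_of_false (hwadj y hy).2 (hwadj y hy).1
    · rw [hρw]
      exact iff_of_false (fun hAd => (hwadj x hx).2 hAd.symm) (fun hAd => (hwadj x hx).1 hAd.symm)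
    · rw [hρB x hx.1 hx.2, hρB y hy.1 hy.2]
      have := φ.map_adj_iff (v := ⟨x, hx.1⟩) (w := ⟨y, hy.1⟩)
      simpa using this
  have hiso : G.induce B' ≃g G.induce B'ᶜ := by
    refine ⟨Equiv.subtypeEquiv ρ hmem, ?_⟩
    intro a b
    simp only [Equiv.subtypeEquiv_apply, comap_adj, Function.Embedding.coe_subtype]
    exact hadj (↑a) (↑b) a.2 b.2
  have hcard : B'.ncard = B.ncard := by
    have h1 : w ∉ B \ {v} := fun hmm => hwB hmm.1
    have h2 : 0 < B.ncard := (Set.ncard_pos (Set.toFinite _)).mpr ⟨v, hv⟩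
    rw [hB', Set.ncard_insert_of_notMem h1 (Set.toFinite _),
      Set.ncard_diff_singleton_of_mem hv]
    omega
  obtain ⟨u, hu⟩ : (G.neighborSet v).Nonempty := by
    apply Set.nonempty_of_ncard_ne_zero
    rw [aux_nbr_card G hcubic v]
    omega
  have huB : u ∈ B := hnbv hu
  have hvu : G.Adj v u := hu
  have hsub : {p : V × V | p.1 ∈ B' ∧ p.2 ∈ B' ∧ G.Adj p.1 p.2} ⊆
      {p : V × V | p.1 ∈ B ∧ p.2 ∈ B ∧ G.Adj p.1 p.2} \ {(v, u)} := by
    rintro ⟨a, b⟩ ⟨ha, hb, hab⟩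
    have haw : a ≠ w := by
      rintro rfl
      have hbC : b ∈ Bᶜ := hnbw hab
      rcases hb with rfl | hb
      · exact G.loopless.irrefl _ hab
      · exact hbC hb.1
    have hbw : b ≠ w := by
      rintro rfl
      have haC : a ∈ Bᶜ := hnbw hab.symm
      rcases ha with rfl | ha
      · exact G.loopless.irrefl _ hab
      · exact haC ha.1
    have ha' : a ∈ B \ {v} := ha.resolve_left haw
    have hb' : b ∈ B \ {v} := hb.resolve_left hbw
    refine ⟨⟨ha'.1, hb'.1, hab⟩, ?_⟩
    intro hmm
    simp only [Set.mem_singleton_iff, Prod.mk.injEq] at hmm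
    exact ha'.2 hmm.1
  refine ⟨B', hcard, ⟨hiso⟩, ?_⟩
  calc {p : V × V | p.1 ∈ B' ∧ p.2 ∈ B' ∧ G.Adj p.1 p.2}.ncard
      ≤ ({p : V × V | p.1 ∈ B ∧ p.2 ∈ B ∧ G.Adj p.1 p.2} \ {(v, u)}).ncard :=
        Set.ncard_le_ncard hsub (Set.toFinite _)
    _ < {p : V × V | p.1 ∈ B ∧ p.2 ∈ B ∧ G.Adj p.1 p.2}.ncard :=
        Set.ncard_diff_singleton_lt_of_mem ⟨hv, huB, hvu⟩ (Set.toFinite _)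

/-- If a cubic graph admits a bisection with isomorphic parts, then it admits a bisection
with isomorphic parts both of maximum degree at most 2. -/
theorem stmt9 {V : Type*} [Fintype V] (G : SimpleGraph V) [DecidableRel G.Adj]
    (hcubic : G.IsRegularOfDegree 3)
    (h : ∃ B : Set V, 2 * B.ncard = Fintype.card V ∧
      Nonempty (G.induce B ≃g G.induce Bᶜ)) :
    ∃ B : Set V, 2 * B.ncard = Fintype.card V ∧
      Nonempty (G.induce B ≃g G.induce Bᶜ) ∧
      (∀ v ∈ B, (G.neighborSet v ∩ B).ncard ≤ 2) ∧
      (∀ v ∈ Bᶜ, (G.neighborSet v ∩ Bᶜ).ncard ≤ 2) := by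
  classical
  obtain ⟨B₀, hB₀, ⟨φ₀⟩⟩ := h
  have main : ∀ n, ∀ B : Set V,
      {p : V × V | p.1 ∈ B ∧ p.2 ∈ B ∧ G.Adj p.1 p.2}.ncard ≤ n →
      2 * B.ncard = Fintype.card V → (G.induce B ≃g G.induce Bᶜ) →
      ∃ B : Set V, 2 * B.ncard = Fintype.card V ∧
        Nonempty (G.induce B ≃g G.induce Bᶜ) ∧
        (∀ v ∈ B, (G.neighborSet v ∩ B).ncard ≤ 2) ∧
        (∀ v ∈ Bᶜ, (G.neighborSet v ∩ Bᶜ).ncard ≤ 2) := by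
    intro n
    induction n using Nat.strong_induction_on with
    | _ n ih =>
      intro B hle hcard φ
      by_cases hgood : (∀ v ∈ B, (G.neighborSet v ∩ B).ncard ≤ 2) ∧
          (∀ v ∈ Bᶜ, (G.neighborSet v ∩ Bᶜ).ncard ≤ 2)
      · exact ⟨B, hcard, ⟨φ⟩, hgood.1, hgood.2⟩
      · have hbad : ∃ v, v ∈ B ∧ G.neighborSet v ⊆ B := by
          rw [not_and_or] at hgood
          push_neg at hgood
          rcases hgood with ⟨v, hv, h2⟩ | ⟨wv, hwv, h2⟩
          · refine ⟨v, hv, aux_full G hcubic ?_⟩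
            have hle3 : (G.neighborSet v ∩ B).ncard ≤ 3 := by
              have := Set.ncard_le_ncard (Set.inter_subset_left
                (s := G.neighborSet v) (t := B)) (Set.toFinite _)
              rw [aux_nbr_card G hcubic v] at this
              exact this
            omega
          · have htr := aux_iso_nbr G φ (φ.symm ⟨wv, hwv⟩)
            rw [φ.apply_symm_apply] at htr
            replace htr : (G.neighborSet wv ∩ Bᶜ).ncard =
                (G.neighborSet (↑(φ.symm ⟨wv, hwv⟩) : V) ∩ B).ncard := htr
            have hle3 : (G.neighborSet (↑(φ.symm ⟨wv, hwv⟩) : V) ∩ B).ncard ≤ 3 := by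
              have := Set.ncard_le_ncard (Set.inter_subset_left
                (s := G.neighborSet (↑(φ.symm ⟨wv, hwv⟩) : V)) (t := B)) (Set.toFinite _)
              rw [aux_nbr_card G hcubic] at this
              exact this
            refine ⟨↑(φ.symm ⟨wv, hwv⟩), (φ.symm ⟨wv, hwv⟩).2, aux_full G hcubic ?_⟩
            omega
        obtain ⟨v, hv, hfull⟩ := hbad
        obtain ⟨B', hc', ⟨ψ⟩, hlt⟩ := aux_swap G hcubic φ hv hfull
        exact ih _ (lt_of_lt_of_le hlt hle) B' le_rfl (by rw [hc']; exact hcard) ψ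
  exact main _ B₀ le_rfl hB₀ φ₀
end

section
/- If a cubic graph G with |V(G)| ≡ 0 (mod 4) admits a Strong Wormald Colouring, then G admits a Strong Ando Colouring: assigning to each vertex the colour of the two like-coloured edges incident with it yields a bisection whose induced monochromatic subgraphs are isomorphic linear forests. -/
open SimpleGraph

lemma isLinearForest_induce_aux {V : Type*} [Fintype V] {H : SimpleGraph V}
    (h : IsLinearForest H) (s : Set V) : IsLinearForest (H.induce s) := by
  constructor
  · intro v c hc
    exact h.1 _ (hc.map (f := (SimpleGraph.Embedding.induce s).toHom)
      Subtype.val_injective)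
  · intro v
    have himg : Subtype.val '' ((H.induce s).neighborSet v) ⊆ H.neighborSet v := by
      rintro _ ⟨u, hu, rfl⟩
      exact hu
    calc ((H.induce s).neighborSet v).ncard
        = (Subtype.val '' ((H.induce s).neighborSet v)).ncard :=
          (Set.ncard_image_of_injective _ Subtype.val_injective).symm
      _ ≤ (H.neighborSet v).ncard := Set.ncard_le_ncard himg (Set.toFinite _)
      _ ≤ 2 := h.2 v

/-- If a cubic graph of order `0 (mod 4)` admits a Strong Wormald Colouring (black edges `S`,
white edges `G.edgeSet \ S`), then colouring each vertex with the colour of the two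
like-coloured edges at it yields a bisection whose induced monochromatic subgraphs are
isomorphic linear forests (a Strong Ando Colouring). -/
theorem stmt10 {V : Type*} [Fintype V] (G : SimpleGraph V) [DecidableRel G.Adj]
    (hcubic : G.IsRegularOfDegree 3) (hmod : Fintype.card V % 4 = 0)
    (S : Set (Sym2 V)) (hS : S ⊆ G.edgeSet)
    (hlfB : IsLinearForest (SimpleGraph.fromEdgeSet S))
    (hlfW : IsLinearForest (SimpleGraph.fromEdgeSet (G.edgeSet \ S)))
    (hiso : Nonempty ((SimpleGraph.fromEdgeSet S) ≃g
      (SimpleGraph.fromEdgeSet (G.edgeSet \ S))))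
    (hlenB : ∀ u v : V, (SimpleGraph.fromEdgeSet S).Adj u v →
      ((SimpleGraph.fromEdgeSet S).neighborSet u).ncard = 2 ∨
      ((SimpleGraph.fromEdgeSet S).neighborSet v).ncard = 2)
    (hlenW : ∀ u v : V, (SimpleGraph.fromEdgeSet (G.edgeSet \ S)).Adj u v →
      ((SimpleGraph.fromEdgeSet (G.edgeSet \ S)).neighborSet u).ncard = 2 ∨
      ((SimpleGraph.fromEdgeSet (G.edgeSet \ S)).neighborSet v).ncard = 2) :
    2 * {v : V | ((SimpleGraph.fromEdgeSet S).neighborSet v).ncard = 2}.ncard =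
        Fintype.card V ∧
    Nonempty (G.induce {v : V | ((SimpleGraph.fromEdgeSet S).neighborSet v).ncard = 2} ≃g
      G.induce {v : V | ((SimpleGraph.fromEdgeSet S).neighborSet v).ncard = 2}ᶜ) ∧
    IsLinearForest
      (G.induce {v : V | ((SimpleGraph.fromEdgeSet S).neighborSet v).ncard = 2}) ∧
    IsLinearForest
      (G.induce {v : V | ((SimpleGraph.fromEdgeSet S).neighborSet v).ncard = 2}ᶜ) := by
  classical
  obtain ⟨φ⟩ := hiso
  set Bk := SimpleGraph.fromEdgeSet S with hBk
  set Wt := SimpleGraph.fromEdgeSet (G.edgeSet \ S) with hWt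
  set B : Set V := {v : V | (Bk.neighborSet v).ncard = 2} with hB
  -- degree sum at every vertex is 3
  have hsum : ∀ v, (Bk.neighborSet v).ncard + (Wt.neighborSet v).ncard = 3 := by
    intro v
    have hU : G.neighborSet v = Bk.neighborSet v ∪ Wt.neighborSet v := by
      ext u
      simp only [mem_neighborSet, Set.mem_union, hBk, hWt, fromEdgeSet_adj, Set.mem_diff,
        mem_edgeSet]
      constructor
      · intro h
        by_cases hs : s(v, u) ∈ S
        · exact Or.inl ⟨hs, h.ne⟩
        · exact Or.inr ⟨⟨h, hs⟩, h.ne⟩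
      · rintro (⟨hs, _⟩ | ⟨⟨h, _⟩, _⟩)
        · exact hS hs
        · exact h
    have hd : Disjoint (Bk.neighborSet v) (Wt.neighborSet v) := by
      rw [Set.disjoint_left]
      intro u hu1 hu2
      simp only [mem_neighborSet, hBk, hWt, fromEdgeSet_adj, Set.mem_diff] at hu1 hu2
      exact hu2.1.2 hu1.1
    have h3 : (G.neighborSet v).ncard = 3 := by
      rw [Set.ncard_eq_toFinset_card', ← neighborFinset_def]
      exact hcubic v
    rw [hU, Set.ncard_union_eq hd (Set.toFinite _) (Set.toFinite _)] at h3
    exact h3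
  have hdB : ∀ v, (Bk.neighborSet v).ncard ≤ 2 := hlfB.2
  have hdW : ∀ v, (Wt.neighborSet v).ncard ≤ 2 := hlfW.2
  -- membership characterisations
  have hmem : ∀ v, v ∈ B ↔ (Bk.neighborSet v).ncard = 2 := fun v => Iff.rfl
  have hmemW : ∀ v, v ∈ B ↔ (Wt.neighborSet v).ncard = 1 := by
    intro v
    have := hsum v; have := hdB v; have := hdW v
    rw [hmem]
    omega
  have hmemc : ∀ v, v ∈ Bᶜ ↔ (Wt.neighborSet v).ncard = 2 := by
    intro v
    have := hsum v; have := hdB v; have := hdW v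
    rw [Set.mem_compl_iff, hmem]
    omega
  have hmemcB : ∀ v, v ∈ Bᶜ → (Bk.neighborSet v).ncard = 1 := by
    intro v hv
    have := (hmemc v).mp hv
    have := hsum v
    omega
  -- iso preserves degree
  have hφdeg : ∀ v, (Bk.neighborSet v).ncard = (Wt.neighborSet (φ v)).ncard := by
    intro v
    rw [← Nat.card_coe_set_eq, ← Nat.card_coe_set_eq]
    exact Nat.card_congr (φ.mapNeighborSet v)
  have hφmem : ∀ v, v ∈ B ↔ φ v ∈ Bᶜ := by
    intro v
    rw [hmem, hmemc, hφdeg]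
  -- adjacency transfer
  have hAB : ∀ u v : V, u ∈ B → v ∈ B → (G.Adj u v ↔ Bk.Adj u v) := by
    intro u v hu hv
    constructor
    · intro h
      by_cases hs : s(u, v) ∈ S
      · exact (fromEdgeSet_adj _).mpr ⟨hs, h.ne⟩
      · exfalso
        have hw : Wt.Adj u v := (fromEdgeSet_adj _).mpr ⟨⟨(mem_edgeSet G).mpr h, hs⟩, h.ne⟩
        rcases hlenW u v hw with h2 | h2
        · rw [hmemW] at hu; omega
        · rw [hmemW] at hv; omega
    · intro h
      rw [hBk, fromEdgeSet_adj] at h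
      exact (mem_edgeSet G).mp (hS h.1)
  have hAW : ∀ u v : V, u ∈ Bᶜ → v ∈ Bᶜ → (G.Adj u v ↔ Wt.Adj u v) := by
    intro u v hu hv
    constructor
    · intro h
      by_cases hs : s(u, v) ∈ S
      · exfalso
        have hb : Bk.Adj u v := (fromEdgeSet_adj _).mpr ⟨hs, h.ne⟩
        rcases hlenB u v hb with h2 | h2
        · have := hmemcB u hu; omega
        · have := hmemcB v hv; omega
      · exact (fromEdgeSet_adj _).mpr ⟨⟨(mem_edgeSet G).mpr h, hs⟩, h.ne⟩
    · intro h
      rw [hWt, fromEdgeSet_adj] at h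
      exact (mem_edgeSet G).mp h.1.1
  refine ⟨?_, ⟨⟨Equiv.subtypeEquiv φ.toEquiv (fun v => hφmem v), ?_⟩⟩, ?_, ?_⟩
  · -- bisection
    have himg : (φ : V → V) '' B = Bᶜ := by
      ext w
      constructor
      · rintro ⟨v, hv, rfl⟩
        exact (hφmem v).mp hv
      · intro hw
        exact ⟨φ.symm w, (hφmem _).mpr (by simpa using hw), by simp⟩
    have h1 : B.ncard = Bᶜ.ncard := by
      rw [← himg]
      exact (Set.ncard_image_of_injective B φ.injective).symm
    have h2 : B.ncard + Bᶜ.ncard = Fintype.card V := by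
      rw [Set.ncard_add_ncard_compl, Nat.card_eq_fintype_card]
    omega
  · -- iso between induced graphs
    intro a b
    simp only [Equiv.subtypeEquiv_apply, comap_adj, Function.Embedding.coe_subtype]
    show G.Adj (φ ↑a) (φ ↑b) ↔ G.Adj ↑a ↑b
    rw [hAW _ _ ((hφmem a).mp a.2) ((hφmem b).mp b.2), hAB _ _ a.2 b.2]
    exact φ.map_adj_iff
  · have hEq : G.induce B = Bk.induce B := by
      ext a b
      exact hAB a b a.2 b.2
    rw [hEq]
    exact isLinearForest_induce_aux hlfB B
  · have hEq : G.induce Bᶜ = Wt.induce Bᶜ := by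
      ext a b
      exact hAW a b a.2 b.2
    rw [hEq]
    exact isLinearForest_induce_aux hlfW Bᶜ
end

section
/- Let G be a cubic graph with |V(G)| ≡ 0 (mod 4) admitting a Strong Wormald Colouring, let c_V be the induced vertex colouring (each vertex receives the colour of the two like-coloured edges at it), and let G' be the spanning subgraph of G consisting of the edges whose endpoints receive different colours in c_V. Then every connected component of G' is bipartite and contains exactly one cycle (i.e., is a tree plus an edge). -/
open SimpleGraph

/-- The spanning subgraph of `G` consisting of the edges whose endpoints lie in different
classes of the bipartition `(B, Bᶜ)`. -/
def diffColourSubgraph {V : Type*} (G : SimpleGraph V) (B : Set V) : SimpleGraph V :=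
  SimpleGraph.fromRel (fun u v => G.Adj u v ∧ ((u ∈ B) ↔ v ∉ B))


private lemma supp_induce_connected' {V : Type*} {G : SimpleGraph V} (c : G.ConnectedComponent) :
    (G.induce c.supp).Connected := by
  induction c using ConnectedComponent.ind with
  | _ u =>
  classical
  apply G.induce_connected_of_patches u (by simp)
  intro v hv
  rw [ConnectedComponent.mem_supp_iff, ConnectedComponent.eq] at hv
  obtain ⟨p⟩ := hv.symm
  refine ⟨{x | x ∈ p.support}, ?_, p.start_mem_support, p.end_mem_support,
    (p.connected_induce_support).preconnected _ _⟩
  intro x hx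
  rw [ConnectedComponent.mem_supp_iff, ConnectedComponent.eq]
  exact ⟨(p.takeUntil x hx).reverse⟩

private lemma deg_ncard' {V : Type*} [Fintype V] {G : SimpleGraph V} [DecidableRel G.Adj]
    (hcubic : G.IsRegularOfDegree 3) (v : V) :
    (G.neighborSet v).ncard = 3 := by
  rw [Set.ncard_eq_toFinset_card', ← hcubic v]
  rfl

private lemma nbr_split' {V : Type*} [Fintype V] {G : SimpleGraph V} (S : Set (Sym2 V))
    (hS : S ⊆ G.edgeSet) (v : V) :
    ((SimpleGraph.fromEdgeSet S).neighborSet v).ncard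
      + ((SimpleGraph.fromEdgeSet (G.edgeSet \ S)).neighborSet v).ncard
      = (G.neighborSet v).ncard := by
  rw [← Set.ncard_union_eq ?_ (Set.toFinite _) (Set.toFinite _)]
  · congr 1
    ext w
    simp only [Set.mem_union, mem_neighborSet, fromEdgeSet_adj, Set.mem_diff]
    constructor
    · rintro (⟨h, _⟩ | ⟨⟨h, _⟩, _⟩)
      · exact (G.mem_edgeSet).mp (hS h)
      · exact (G.mem_edgeSet).mp h
    · intro h
      by_cases hs : s(v, w) ∈ S
      · exact Or.inl ⟨hs, h.ne⟩
      · exact Or.inr ⟨⟨(G.mem_edgeSet).mpr h, hs⟩, h.ne⟩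
  · rw [Set.disjoint_left]
    rintro w ⟨h1, -⟩ ⟨⟨-, h2⟩, -⟩
    exact h2 h1

/-- Given a Strong Wormald Colouring of a cubic graph of order `0 (mod 4)` with induced
vertex colouring `B` = vertices incident with two black edges, every connected component of
the subgraph `G'` of bichromatic edges is bipartite and is a tree plus an edge (connected,
with as many edges as vertices). -/
theorem stmt11 {V : Type*} [Fintype V] (G : SimpleGraph V) [DecidableRel G.Adj]
    (hcubic : G.IsRegularOfDegree 3) (hmod : Fintype.card V % 4 = 0)
    (S : Set (Sym2 V)) (hS : S ⊆ G.edgeSet)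
    (hlfB : IsLinearForest (SimpleGraph.fromEdgeSet S))
    (hlfW : IsLinearForest (SimpleGraph.fromEdgeSet (G.edgeSet \ S)))
    (hiso : Nonempty ((SimpleGraph.fromEdgeSet S) ≃g
      (SimpleGraph.fromEdgeSet (G.edgeSet \ S))))
    (hlenB : ∀ u v : V, (SimpleGraph.fromEdgeSet S).Adj u v →
      ((SimpleGraph.fromEdgeSet S).neighborSet u).ncard = 2 ∨
      ((SimpleGraph.fromEdgeSet S).neighborSet v).ncard = 2)
    (hlenW : ∀ u v : V, (SimpleGraph.fromEdgeSet (G.edgeSet \ S)).Adj u v →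
      ((SimpleGraph.fromEdgeSet (G.edgeSet \ S)).neighborSet u).ncard = 2 ∨
      ((SimpleGraph.fromEdgeSet (G.edgeSet \ S)).neighborSet v).ncard = 2) :
    ∀ c : (diffColourSubgraph G
        {v : V | ((SimpleGraph.fromEdgeSet S).neighborSet v).ncard = 2}).ConnectedComponent,
      ((diffColourSubgraph G
          {v : V | ((SimpleGraph.fromEdgeSet S).neighborSet v).ncard = 2}).induce
          c.supp).Connected ∧
      ((diffColourSubgraph G
          {v : V | ((SimpleGraph.fromEdgeSet S).neighborSet v).ncard = 2}).induce
          c.supp).Colorable 2 ∧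
      ((diffColourSubgraph G
          {v : V | ((SimpleGraph.fromEdgeSet S).neighborSet v).ncard = 2}).induce
          c.supp).edgeSet.ncard = c.supp.ncard := by
  classical
  set GB := SimpleGraph.fromEdgeSet S with hGBdef
  set GW := SimpleGraph.fromEdgeSet (G.edgeSet \ S) with hGWdef
  set B := {v : V | (GB.neighborSet v).ncard = 2} with hBdef
  set G' := diffColourSubgraph G B with hG'def
  -- degree bookkeeping
  have hsplit : ∀ v, (GB.neighborSet v).ncard + (GW.neighborSet v).ncard = 3 := by
    intro v; rw [nbr_split' S hS v, deg_ncard' hcubic]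
  have hWB : ∀ v ∈ B, (GW.neighborSet v).ncard = 1 := by
    intro v hv
    have h1 := hsplit v
    have h2 := hlfW.2 v
    have h3 : (GB.neighborSet v).ncard = 2 := hv
    omega
  have hBW : ∀ v ∉ B, (GB.neighborSet v).ncard = 1 := by
    intro v hv
    have h1 := hsplit v
    have h2 := hlfW.2 v
    have h3 := hlfB.2 v
    have h4 : (GB.neighborSet v).ncard ≠ 2 := hv
    omega
  -- the distinguished neighbour
  have key : ∀ v : V, ∃ w : V,
      (if v ∈ B then GW.neighborSet v else GB.neighborSet v) = {w} := by
    intro v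
    split_ifs with h
    · exact Set.ncard_eq_one.mp (hWB v h)
    · exact Set.ncard_eq_one.mp (hBW v h)
  choose nbr hnbr using key
  have hWset : ∀ v ∈ B, GW.neighborSet v = {nbr v} := by
    intro v hv; have := hnbr v; rwa [if_pos hv] at this
  have hBset : ∀ v ∉ B, GB.neighborSet v = {nbr v} := by
    intro v hv; have := hnbr v; rwa [if_neg hv] at this
  have hWadj : ∀ v ∈ B, GW.Adj v (nbr v) := by
    intro v hv
    have : nbr v ∈ GW.neighborSet v := by rw [hWset v hv]; rfl
    exact this
  have hBadj : ∀ v ∉ B, GB.Adj v (nbr v) := by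
    intro v hv
    have : nbr v ∈ GB.neighborSet v := by rw [hBset v hv]; rfl
    exact this
  have hGBle : GB ≤ G := by
    rw [hGBdef, ← G.fromEdgeSet_edgeSet]
    exact SimpleGraph.fromEdgeSet_mono hS
  have hGWle : GW ≤ G := by
    rw [hGWdef]
    conv_rhs => rw [← G.fromEdgeSet_edgeSet]
    exact SimpleGraph.fromEdgeSet_mono Set.diff_subset
  -- the chosen edge is bichromatic
  have hcrossB : ∀ v ∈ B, nbr v ∉ B := by
    intro v hv
    rcases hlenW v (nbr v) (hWadj v hv) with h | h
    · rw [hWB v hv] at h; omega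
    · intro hmem
      have h1 := hsplit (nbr v)
      have h2 : (GB.neighborSet (nbr v)).ncard = 2 := hmem
      omega
  have hcrossW : ∀ v ∉ B, nbr v ∈ B := by
    intro v hv
    rcases hlenB v (nbr v) (hBadj v hv) with h | h
    · rw [hBW v hv] at h; omega
    · exact h
  have hGadj : ∀ v, G.Adj v (nbr v) := by
    intro v
    by_cases hv : v ∈ B
    · exact hGWle (hWadj v hv)
    · exact hGBle (hBadj v hv)
  have hG'adj : ∀ v, G'.Adj v (nbr v) := by
    intro v
    rw [hG'def, diffColourSubgraph, fromRel_adj]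
    refine ⟨(hGadj v).ne, Or.inl ⟨hGadj v, ?_⟩⟩
    by_cases hv : v ∈ B
    · simp [hv, hcrossB v hv]
    · simp [hv, hcrossW v hv]
  have hcross : ∀ u v, G'.Adj u v → G.Adj u v ∧ ¬(u ∈ B ↔ v ∈ B) := by
    intro u v huv
    rw [hG'def, diffColourSubgraph, fromRel_adj] at huv
    obtain ⟨hne, h | h⟩ := huv
    · exact ⟨h.1, by tauto⟩
    · exact ⟨h.1.symm, by tauto⟩
  -- the injection from vertices to bichromatic edges
  set f : V → Sym2 V := fun v => s(v, nbr v) with hfdef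
  have hmemf : ∀ v, v ∈ f v := fun v => Sym2.mem_mk_left _ _
  have hfG' : ∀ v, f v ∈ G'.edgeSet := fun v => (G'.mem_edgeSet).mpr (hG'adj v)
  have hfinj : Function.Injective f := by
    intro u v huv
    rw [hfdef] at huv
    rcases Sym2.eq_iff.mp huv with ⟨h, -⟩ | ⟨h1, h2⟩
    · exact h
    · by_contra hne
      by_cases hu : u ∈ B <;> by_cases hv : v ∈ B
      · have hadj : GW.Adj u v := h2 ▸ hWadj u hu
        rcases hlenW u v hadj with h | h
        · rw [hWB u hu] at h; omega
        · rw [hWB v hv] at h; omega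
      · have hadj : GW.Adj u v := h2 ▸ hWadj u hu
        have hadj' : GB.Adj v u := h1 ▸ hBadj v hv
        have hs1 : s(u, v) ∉ S := by
          have := ((fromEdgeSet_adj _).mp hadj).1
          exact this.2
        have hs2 : s(v, u) ∈ S := ((fromEdgeSet_adj _).mp hadj').1
        rw [Sym2.eq_swap] at hs2
        exact hs1 hs2
      · have hadj : GW.Adj v u := h1 ▸ hWadj v hv
        have hadj' : GB.Adj u v := h2 ▸ hBadj u hu
        have hs1 : s(v, u) ∉ S := ((fromEdgeSet_adj _).mp hadj).1.2
        have hs2 : s(u, v) ∈ S := ((fromEdgeSet_adj _).mp hadj').1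
        rw [Sym2.eq_swap] at hs2
        exact hs1 hs2
      · have hadj : GB.Adj u v := h2 ▸ hBadj u hu
        rcases hlenB u v hadj with h | h
        · rw [hBW u hu] at h; omega
        · rw [hBW v hv] at h; omega
  have hsurj : ∀ e ∈ G'.edgeSet, ∃ v, v ∈ e ∧ f v = e := by
    intro e he
    induction e with
    | _ a b =>
    rw [G'.mem_edgeSet] at he
    obtain ⟨hGab, hiff⟩ := hcross a b he
    by_cases ha : a ∈ B
    · have hb : b ∉ B := by tauto
      by_cases hs : s(a, b) ∈ S
      · have hadj : GB.Adj b a := (fromEdgeSet_adj _).mpr ⟨by rwa [Sym2.eq_swap], hGab.ne'⟩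
        have : a ∈ GB.neighborSet b := hadj
        rw [hBset b hb, Set.mem_singleton_iff] at this
        exact ⟨b, Sym2.mem_mk_right _ _, by rw [hfdef]; simp only [← this]; exact Sym2.eq_swap⟩
      · have hadj : GW.Adj a b := (fromEdgeSet_adj _).mpr ⟨⟨(G.mem_edgeSet).mpr hGab, hs⟩, hGab.ne⟩
        have : b ∈ GW.neighborSet a := hadj
        rw [hWset a ha, Set.mem_singleton_iff] at this
        exact ⟨a, Sym2.mem_mk_left _ _, by rw [hfdef, this]⟩
    · have hb : b ∈ B := by tauto
      by_cases hs : s(a, b) ∈ S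
      · have hadj : GB.Adj a b := (fromEdgeSet_adj _).mpr ⟨hs, hGab.ne⟩
        have : b ∈ GB.neighborSet a := hadj
        rw [hBset a ha, Set.mem_singleton_iff] at this
        exact ⟨a, Sym2.mem_mk_left _ _, by rw [hfdef, this]⟩
      · have hadj : GW.Adj b a := (fromEdgeSet_adj _).mpr
          ⟨⟨(G.mem_edgeSet).mpr hGab.symm, by rwa [Sym2.eq_swap]⟩, hGab.ne'⟩
        have : a ∈ GW.neighborSet b := hadj
        rw [hWset b hb, Set.mem_singleton_iff] at this
        exact ⟨b, Sym2.mem_mk_right _ _, by rw [hfdef]; simp only [← this]; exact Sym2.eq_swap⟩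
  -- now the per-component statements
  intro c
  refine ⟨supp_induce_connected' c, ?_, ?_⟩
  · -- 2-colourable
    refine ⟨SimpleGraph.Coloring.mk
      (fun x => if (x : V) ∈ B then (0 : Fin 2) else 1) ?_⟩
    intro x y hxy
    have h := (hcross _ _ ((comap_adj).mp hxy)).2
    by_cases hx : (x : V) ∈ B <;> by_cases hy : (y : V) ∈ B <;> simp [hx, hy] at h ⊢
  · -- edge count
    have hnbr_supp : ∀ v ∈ c.supp, nbr v ∈ c.supp := by
      intro v hv
      rw [ConnectedComponent.mem_supp_iff] at hv ⊢
      rw [← hv]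
      exact ConnectedComponent.sound (hG'adj v).symm.reachable
    have himg1 : f '' c.supp = {e | e ∈ G'.edgeSet ∧ ∀ x ∈ e, x ∈ c.supp} := by
      ext e
      constructor
      · rintro ⟨v, hv, rfl⟩
        refine ⟨hfG' v, fun x hx => ?_⟩
        rcases Sym2.mem_iff.mp hx with rfl | rfl
        · exact hv
        · exact hnbr_supp v hv
      · rintro ⟨he, hsupp⟩
        obtain ⟨v, hvmem, hfv⟩ := hsurj e he
        exact ⟨v, hsupp v hvmem, hfv⟩
    have himg2 : Sym2.map (Subtype.val : c.supp → V) '' (G'.induce c.supp).edgeSet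
        = {e | e ∈ G'.edgeSet ∧ ∀ x ∈ e, x ∈ c.supp} := by
      ext e
      constructor
      · rintro ⟨e', he', rfl⟩
        induction e' with
        | _ x y =>
        rw [mem_edgeSet] at he'
        have hadj : G'.Adj (x : V) (y : V) := (comap_adj).mp he'
        refine ⟨(G'.mem_edgeSet).mpr hadj, fun z hz => ?_⟩
        rw [Sym2.map_pair_eq] at hz
        rcases Sym2.mem_iff.mp hz with rfl | rfl
        · exact x.2
        · exact y.2
      · rintro ⟨he, hsupp⟩
        induction e with
        | _ a b =>
        have ha : a ∈ c.supp := hsupp a (Sym2.mem_mk_left _ _)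
        have hb : b ∈ c.supp := hsupp b (Sym2.mem_mk_right _ _)
        refine ⟨s(⟨a, ha⟩, ⟨b, hb⟩), ?_, by rw [Sym2.map_pair_eq]⟩
        rw [mem_edgeSet]
        exact (comap_adj).mpr ((G'.mem_edgeSet).mp he)
    calc (G'.induce c.supp).edgeSet.ncard
        = (Sym2.map (Subtype.val : c.supp → V) '' (G'.induce c.supp).edgeSet).ncard :=
          (Set.ncard_image_of_injective _ (Sym2.map.injective Subtype.val_injective)).symm
      _ = (f '' c.supp).ncard := by rw [himg2, himg1]
      _ = c.supp.ncard := Set.ncard_image_of_injective _ hfinj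
end

section
/- The Heawood graph has no decomposition of its edge set into two linear forests in which every path component has length at most 3. -/
open SimpleGraph

/-- The Heawood graph (LCF notation `[5,-5]^7`): the 14-cycle `0,1,…,13` together with the
chords `{i, i+5}` for `i` even. It is the incidence graph of the Fano plane. -/
def heawood : SimpleGraph (Fin 14) :=
  SimpleGraph.fromRel (fun i j => j = i + 1 ∨ (i.val % 2 = 0 ∧ j = i + 5))


private lemma card_succ_le_of_surj {α β : Type*} [Finite α] {f : α → β}
    (hf : Function.Surjective f) {a b : α} (hab : a ≠ b) (hfab : f a = f b) :
    Nat.card β + 1 ≤ Nat.card α := by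
  classical
  have hβ : Finite β := Finite.of_surjective f hf
  set g := Function.surjInv hf with hg
  have hgi : Function.Injective g := Function.injective_surjInv hf
  have hga : ∀ y, f (g y) = y := Function.surjInv_eq hf
  have hone : a ∉ Set.range g ∨ b ∉ Set.range g := by
    by_contra h
    push_neg at h
    obtain ⟨⟨y, hy⟩, ⟨z, hz⟩⟩ := h
    apply hab
    have ha' : g (f a) = a := by rw [← hy, hga]
    have hb' : g (f b) = b := by rw [← hz, hga]
    rw [← ha', ← hb', hfab]
  have key : ∀ c : α, c ∉ Set.range g → Nat.card β + 1 ≤ Nat.card α := by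
    intro c hc
    have hinj : Function.Injective (fun o : Option β => o.elim c g) := by
      rintro (_ | y) (_ | z) h
      · rfl
      · exact absurd ⟨z, h.symm⟩ hc
      · exact absurd ⟨y, h⟩ hc
      · simp only [Option.elim] at h
        rw [hgi h]
    simpa [Finite.card_option] using Nat.card_le_card_of_injective _ hinj
  rcases hone with h | h
  · exact key a h
  · exact key b h

private lemma forest_bound {V : Type*} [Fintype V] :
    ∀ (n : ℕ) (G : SimpleGraph V), G.IsAcyclic → G.edgeSet.ncard = n →
      G.edgeSet.ncard + Nat.card G.ConnectedComponent ≤ Fintype.card V := by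
  intro n
  induction n with
  | zero =>
    intro G _ h0
    rw [h0, Nat.zero_add, ← Nat.card_eq_fintype_card]
    exact Nat.card_le_card_of_surjective G.connectedComponentMk
      (fun c => c.exists_rep)
  | succ n ih =>
    intro G hG hcard
    have hne : G.edgeSet.Nonempty := by
      apply Set.nonempty_of_ncard_ne_zero
      omega
    obtain ⟨e, he⟩ := hne
    induction e using Sym2.ind with
    | _ a b =>
    have hab : G.Adj a b := he
    set G' := G \ fromEdgeSet {s(a, b)} with hG'def
    have hle : G' ≤ G := sdiff_le
    have hG' : G'.IsAcyclic := fun v c hc => hG (c.mapLe hle) (hc.mapLe hle)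
    have hedge : G'.edgeSet = G.edgeSet \ {s(a, b)} := by
      rw [hG'def, edgeSet_sdiff, edgeSet_fromEdgeSet, edgeSet_sdiff_sdiff_isDiag]
    have hcard' : G'.edgeSet.ncard = n := by
      have : (G.edgeSet \ {s(a,b)}).ncard = G.edgeSet.ncard - 1 :=
        Set.ncard_diff_singleton_of_mem he
      rw [hedge, this, hcard]
      omega
    have hbridge : ¬ G'.Reachable a b :=
      ((isAcyclic_iff_forall_adj_isBridge.mp hG) hab)
    set f : G'.ConnectedComponent → G.ConnectedComponent :=
      ConnectedComponent.map (Hom.ofLE hle) with hf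
    have hsurj : Function.Surjective f := by
      intro c
      obtain ⟨v, rfl⟩ := c.exists_rep
      exact ⟨G'.connectedComponentMk v, rfl⟩
    have hne' : G'.connectedComponentMk a ≠ G'.connectedComponentMk b :=
      fun h => hbridge (ConnectedComponent.exact h)
    have heq : f (G'.connectedComponentMk a) = f (G'.connectedComponentMk b) := by
      have : G.connectedComponentMk a = G.connectedComponentMk b :=
        ConnectedComponent.connectedComponentMk_eq_of_adj hab
      simpa [hf, ConnectedComponent.map_mk] using this
    have hcc := card_succ_le_of_surj hsurj hne' heq
    have hih := ih G' hG' hcard'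
    omega

private lemma card_le_comp {V : Type*} [Fintype V] (G : SimpleGraph V) {k : ℕ}
    (h : ∀ c : G.ConnectedComponent, c.supp.ncard ≤ k) :
    Fintype.card V ≤ k * Nat.card G.ConnectedComponent := by
  classical
  letI : Fintype G.ConnectedComponent := Fintype.ofFinite _
  rw [Nat.card_eq_fintype_card]
  have hfib := Finset.card_eq_sum_card_fiberwise
    (f := G.connectedComponentMk) (s := Finset.univ) (t := Finset.univ)
    (fun x _ => Finset.mem_univ _)
  have hsupp : ∀ c : G.ConnectedComponent,
      (Finset.univ.filter fun v => G.connectedComponentMk v = c).card = c.supp.ncard := by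
    intro c
    rw [Set.ncard_eq_toFinset_card']
    congr 1
    ext v
    simp [ConnectedComponent.mem_supp_iff]
  calc Fintype.card V = ∑ c : G.ConnectedComponent,
        (Finset.univ.filter fun v => G.connectedComponentMk v = c).card := hfib
    _ ≤ ∑ _c : G.ConnectedComponent, k := by
        apply Finset.sum_le_sum
        intro c _
        rw [hsupp c]
        exact h c
    _ = k * Fintype.card G.ConnectedComponent := by
        rw [Finset.sum_const, Finset.card_univ, smul_eq_mul, Nat.mul_comm]

private instance heawoodDec : DecidableRel heawood.Adj := fun a b =>
  decidable_of_iff (a ≠ b ∧ ((b = a + 1 ∨ (a.val % 2 = 0 ∧ b = a + 5)) ∨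
    (a = b + 1 ∨ (b.val % 2 = 0 ∧ a = b + 5)))) Iff.rfl

private lemma heawood_count : heawood.edgeSet.ncard = 21 := by
  have h1 : heawood.edgeSet.ncard = heawood.edgeFinset.card := by
    rw [← coe_edgeFinset, Set.ncard_coe_finset]
  have h2 : ∑ v, heawood.degree v = 2 * heawood.edgeFinset.card :=
    heawood.sum_degrees_eq_twice_card_edges
  have h3 : ∑ v : Fin 14, heawood.degree v = 42 := by decide
  omega

/-- The Heawood graph cannot be decomposed into two linear forests all of whose path
components have length at most 3 (i.e. at most 4 vertices). -/
theorem stmt14 : ¬ ∃ S : Set (Sym2 (Fin 14)), S ⊆ heawood.edgeSet ∧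
    IsLinearForest (SimpleGraph.fromEdgeSet S) ∧
    IsLinearForest (SimpleGraph.fromEdgeSet (heawood.edgeSet \ S)) ∧
    (∀ c : (SimpleGraph.fromEdgeSet S).ConnectedComponent, c.supp.ncard ≤ 4) ∧
    (∀ c : (SimpleGraph.fromEdgeSet (heawood.edgeSet \ S)).ConnectedComponent,
      c.supp.ncard ≤ 4) := by
  rintro ⟨S, hsub, hlf1, hlf2, hc1, hc2⟩
  have key : ∀ T : Set (Sym2 (Fin 14)), T ⊆ heawood.edgeSet →
      (SimpleGraph.fromEdgeSet T).IsAcyclic →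
      (∀ c : (SimpleGraph.fromEdgeSet T).ConnectedComponent, c.supp.ncard ≤ 4) →
      T.ncard ≤ 10 := by
    intro T hT hac hcomp
    have hE : (SimpleGraph.fromEdgeSet T).edgeSet = T := by
      rw [edgeSet_fromEdgeSet]
      ext e
      simp only [Set.mem_diff, Set.mem_setOf_eq, and_iff_left_iff_imp]
      intro he
      exact heawood.not_isDiag_of_mem_edgeSet (hT he)
    have h1 := forest_bound (T.ncard) (SimpleGraph.fromEdgeSet T) hac (by rw [hE])
    have h2 := card_le_comp (SimpleGraph.fromEdgeSet T) hcomp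
    rw [hE] at h1
    simp only [Fintype.card_fin] at h1 h2
    omega
  have hS := key S hsub hlf1.1 hc1
  have hT := key _ Set.diff_subset hlf2.1 hc2
  have hfin : heawood.edgeSet.Finite := Set.toFinite _
  have hd : (heawood.edgeSet \ S).ncard = heawood.edgeSet.ncard - S.ncard :=
    Set.ncard_diff hsub (hfin.subset hsub)
  have hle' : S.ncard ≤ heawood.edgeSet.ncard := Set.ncard_le_ncard hsub hfin
  have h21 := heawood_count
  omega
end

section
/- Let G = C(n,p) be a cycle permutation graph with n odd. If G contains a good configuration, then G admits a 2-bisection. -/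
open SimpleGraph

/-- In a graph where every vertex has at most one neighbour, components have ≤ 2 vertices. -/
lemma small_of_deg_le_one {V : Type*} [Finite V] (G : SimpleGraph V)
    (h : ∀ x y z : V, G.Adj x y → G.Adj x z → y = z) :
    ∀ c : G.ConnectedComponent, c.supp.ncard ≤ 2 := by
  intro c
  obtain ⟨v, hv⟩ := c.exists_rep
  have key : ∀ {u x : V} (p : G.Walk u x), (u = v ∨ G.Adj v u) → (x = v ∨ G.Adj v x) := by
    intro u x p
    induction p with
    | nil => exact id
    | cons ha q ih =>
      rename_i a b _
      intro hu
      apply ih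
      rcases hu with rfl | hu
      · exact Or.inr ha
      · exact Or.inl (h a b v ha hu.symm)
  have hsub : c.supp ⊆ insert v {x | G.Adj v x} := by
    intro x hx
    rw [SimpleGraph.ConnectedComponent.mem_supp_iff] at hx
    have hr : G.Reachable v x := by
      rw [← hv] at hx
      exact (SimpleGraph.ConnectedComponent.eq.mp hx).symm
    obtain ⟨p⟩ := hr
    rcases key p (Or.inl rfl) with rfl | hadj
    · exact Set.mem_insert _ _
    · exact Set.mem_insert_of_mem _ hadj
  calc c.supp.ncard ≤ (insert v {x | G.Adj v x}).ncard := Set.ncard_le_ncard hsub (Set.toFinite _)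
    _ ≤ {x | G.Adj v x}.ncard + 1 := Set.ncard_insert_le _ _
    _ ≤ 1 + 1 := by
        gcongr
        exact (Set.ncard_le_one (Set.toFinite _)).mpr (fun a ha b hb => h v a b ha hb)
    _ = 2 := rfl

lemma fin_sub_val {n : ℕ} (a b : Fin n) :
    (a - b).val = if b.val ≤ a.val then a.val - b.val else n + a.val - b.val := by
  have ha := a.is_lt
  have hb := b.is_lt
  rw [Fin.sub_def]
  show (n - b.val + a.val) % n = _
  split
  · have h : n - b.val + a.val = n + (a.val - b.val) := by omega
    rw [h, Nat.add_mod_left, Nat.mod_eq_of_lt (by omega)]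
  · rw [Nat.mod_eq_of_lt (by omega)]
    omega

/-- If a cycle permutation graph `C(n,p)` with `n` odd contains a good configuration
`{a_r = u r, a_{r+1} = u (r+1), a = u t, b_s = v s, b_{s+1} = v (s+1), b = v w}`
(with `a_r b`, `a_{r+1} b_s`, `a b_{s+1}` matching edges, and the path in `C₁` from `a` to
`a_r` avoiding `a_{r+1}`, and the path in `C₂` from `b` to `b_s` avoiding `b_{s+1}`,
both of even length), then it admits a 2-bisection. -/
theorem stmt15 (n : ℕ) [NeZero n] (hn : 4 ≤ n) (hodd : Odd n) (p : Equiv.Perm (Fin n))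
    (r s t w : Fin n)
    (h1 : p w = r) (h2 : p s = r + 1) (h3 : p (s + 1) = t)
    (ht1 : t ≠ r) (ht2 : t ≠ r + 1) (hw1 : w ≠ s) (hw2 : w ≠ s + 1)
    (he1 : Even ((r - t).val)) (he2 : Even ((s - w).val)) :
    ∃ B : Set (Fin n ⊕ Fin n), IsKBisection (cyclePerm n p) 2 B := by
  classical
  set G := cyclePerm n p with hG
  set c1 := r + 1 with hc1
  set c2 := s + 1 with hc2
  have hno : n % 2 = 1 := Nat.odd_iff.mp hodd
  have hone : (1 : Fin n).val = 1 := by rw [Fin.val_one', Nat.mod_eq_of_lt (by omega)]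
  have hmod : ∀ x : ℕ, x < n → (x + 1) % n = if x + 1 < n then x + 1 else 0 := by
    intro x hx
    split
    · exact Nat.mod_eq_of_lt ‹_›
    · have h : x + 1 = n := by omega
      rw [h, Nat.mod_self]
  have haddv : ∀ a : Fin n, (a + 1).val = if a.val + 1 < n then a.val + 1 else 0 := by
    intro a
    have h : (a + 1).val = (a.val + (1 : Fin n).val) % n := by rw [Fin.add_def]
    rw [h, hone, hmod a.val a.is_lt]
  -- basic colour values
  have hD_r : (r - c1).val = n - 1 := by
    rw [fin_sub_val, hc1, haddv]
    have := r.is_lt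
    split_ifs <;> omega
  have hD_c1 : (c1 - c1).val = 0 := by rw [sub_self]; rfl
  have hD_s : (s - c2).val = n - 1 := by
    rw [fin_sub_val, hc2, haddv]
    have := s.is_lt
    split_ifs <;> omega
  have hD_c2 : (c2 - c2).val = 0 := by rw [sub_self]; rfl
  have hrc1 : r ≠ c1 := by
    intro h
    rw [h, hD_c1] at hD_r
    omega
  have hsc2 : s ≠ c2 := by
    intro h
    rw [h, hD_c2] at hD_s
    omega
  -- colour of t on the outer cycle is black (even)
  have hF3 : (t - c1).val % 2 = 0 := by
    have hrt : (r - t).val % 2 = 0 := Nat.even_iff.mp he1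
    have htr : t.val ≠ r.val := fun h => ht1 (Fin.ext h)
    have htc : t.val ≠ c1.val := fun h => ht2 (Fin.ext h)
    rw [fin_sub_val] at hrt ⊢
    rw [hc1, haddv] at htc ⊢
    have h1 := t.is_lt
    have h2 := r.is_lt
    split_ifs at hrt htc ⊢ <;> omega
  -- colour of w on the inner cycle is white (even)
  have hF6 : (w - c2).val % 2 = 0 := by
    have hsw : (s - w).val % 2 = 0 := Nat.even_iff.mp he2
    have hws : w.val ≠ s.val := fun h => hw1 (Fin.ext h)
    have hwc : w.val ≠ c2.val := fun h => hw2 (Fin.ext h)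
    rw [fin_sub_val] at hsw ⊢
    rw [hc2, haddv] at hwc ⊢
    have h1 := w.is_lt
    have h2 := s.is_lt
    split_ifs at hsw hwc ⊢ <;> omega
  -- alternation along a cycle
  have halt : ∀ (c a a' : Fin n), a'.val = (a.val + 1) % n →
      (a' - c).val % 2 = (a - c).val % 2 → (a - c).val = n - 1 ∧ a' = c := by
    intro c a a' hstep hpar
    have haa : a' = a + 1 := by
      apply Fin.ext
      rw [haddv, hstep, hmod a.val a.is_lt]
    have hsub : a' - c = (a - c) + 1 := by rw [haa]; abel
    have hval : (a' - c).val = if (a - c).val + 1 < n then (a - c).val + 1 else 0 := by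
      rw [hsub, haddv]
    have hlt := (a - c).is_lt
    have hDn : (a - c).val = n - 1 := by
      rw [hval] at hpar
      split_ifs at hpar <;> omega
    refine ⟨hDn, ?_⟩
    have : (a' - c).val = 0 := by rw [hval]; split_ifs <;> omega
    have h0 : a' - c = 0 := by
      apply Fin.ext
      rw [this]; rfl
    exact sub_eq_zero.mp h0
  have hInj1 : ∀ a : Fin n, (a - c1).val = n - 1 → a = r := by
    intro a ha
    have : a - c1 = r - c1 := Fin.ext (by rw [ha, hD_r])
    exact sub_left_injective this
  have hInj2 : ∀ a : Fin n, (a - c2).val = n - 1 → a = s := by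
    intro a ha
    have : a - c2 = s - c2 := Fin.ext (by rw [ha, hD_s])
    exact sub_left_injective this
  have cyc1 : ∀ a a' : Fin n, a'.val = (a.val + 1) % n →
      (a' - c1).val % 2 = (a - c1).val % 2 → a = r ∧ a' = c1 := by
    intro a a' h hp
    obtain ⟨h1', h2'⟩ := halt c1 a a' h hp
    exact ⟨hInj1 a h1', h2'⟩
  have cyc2 : ∀ a a' : Fin n, a'.val = (a.val + 1) % n →
      (a' - c2).val % 2 = (a - c2).val % 2 → a = s ∧ a' = c2 := by
    intro a a' h hp
    obtain ⟨h1', h2'⟩ := halt c2 a a' h hp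
    exact ⟨hInj2 a h1', h2'⟩
  -- adjacency characterisations
  have hAdjLL : ∀ j j' : Fin n, G.Adj (.inl j) (.inl j') →
      (j'.val = (j.val + 1) % n ∨ j.val = (j'.val + 1) % n) := by
    intro j j' h
    simp only [hG, cyclePerm, SimpleGraph.fromRel_adj] at h
    exact h.2
  have hAdjRR : ∀ i i' : Fin n, G.Adj (.inr i) (.inr i') →
      (i'.val = (i.val + 1) % n ∨ i.val = (i'.val + 1) % n) := by
    intro i i' h
    simp only [hG, cyclePerm, SimpleGraph.fromRel_adj] at h
    exact h.2
  have hAdjLR : ∀ j i : Fin n, G.Adj (.inl j) (.inr i) → j = p i := by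
    intro j i h
    simp only [hG, cyclePerm, SimpleGraph.fromRel_adj] at h
    rcases h.2 with h' | h'
    · exact h'.elim
    · exact h'
  have hAdjRL : ∀ i j : Fin n, G.Adj (.inr i) (.inl j) → j = p i := by
    intro i j h
    simp only [hG, cyclePerm, SimpleGraph.fromRel_adj] at h
    rcases h.2 with h' | h'
    · exact h'
    · exact h'.elim
  -- the bisection
  set B : Set (Fin n ⊕ Fin n) :=
    {x | Sum.elim (fun j => (j - c1).val % 2 = 0) (fun i => (i - c2).val % 2 = 1) x} with hB
  have hmemL : ∀ j : Fin n, (Sum.inl j ∈ B) ↔ (j - c1).val % 2 = 0 := fun j => Iff.rfl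
  have hmemR : ∀ i : Fin n, (Sum.inr i ∈ B) ↔ (i - c2).val % 2 = 1 := fun i => Iff.rfl
  -- navigation functions (the unique potential monochromatic neighbour)
  set navB : (Fin n ⊕ Fin n) → (Fin n ⊕ Fin n) := fun x =>
    match x with
    | .inl j => if j = r then .inl c1 else if j = c1 then .inl r else .inr (p.symm j)
    | .inr i => .inl (p i) with hnavB
  set navW : (Fin n ⊕ Fin n) → (Fin n ⊕ Fin n) := fun x =>
    match x with
    | .inl j => .inr (p.symm j)
    | .inr i => if i = s then .inr c2 else if i = c2 then .inr s else .inl (p i) with hnavW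
  have charB : ∀ x y, x ∈ B → y ∈ B → G.Adj x y → y = navB x := by
    rintro (j | i) (j' | i') hx hy hadj
    · rcases hAdjLL j j' hadj with h | h
      · obtain ⟨rfl, rfl⟩ := cyc1 j j' h (by rw [hmemL] at hx hy; omega)
        simp [hnavB]
      · obtain ⟨rfl, rfl⟩ := cyc1 j' j h (by rw [hmemL] at hx hy; omega)
        simp [hnavB, hrc1.symm]
    · have hpi : j = p i' := hAdjLR j i' hadj
      have hjr : j ≠ r := by
        rintro rfl
        have : i' = w := p.injective (by rw [← hpi, h1])
        rw [hmemR, this] at hy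
        omega
      have hjc : j ≠ c1 := by
        rintro rfl
        have : i' = s := p.injective (by rw [← hpi, h2])
        rw [hmemR, this, hD_s] at hy
        omega
      have : p.symm j = i' := by rw [hpi, Equiv.symm_apply_apply]
      simp [hnavB, hjr, hjc, this]
    · have hpi : j' = p i := hAdjRL i j' hadj
      simp [hnavB, hpi]
    · rcases hAdjRR i i' hadj with h | h
      · obtain ⟨rfl, rfl⟩ := cyc2 i i' h (by rw [hmemR] at hx hy; omega)
        rw [hmemR, hD_s] at hx
        omega
      · obtain ⟨rfl, rfl⟩ := cyc2 i' i h (by rw [hmemR] at hx hy; omega)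
        rw [hmemR, hD_c2] at hx
        omega
  have charW : ∀ x y, x ∈ Bᶜ → y ∈ Bᶜ → G.Adj x y → y = navW x := by
    rintro (j | i) (j' | i') hx hy hadj
    · rw [Set.mem_compl_iff, hmemL] at hx hy
      rcases hAdjLL j j' hadj with h | h
      · obtain ⟨rfl, rfl⟩ := cyc1 j j' h (by omega)
        rw [hD_r] at hx
        omega
      · obtain ⟨rfl, rfl⟩ := cyc1 j' j h (by omega)
        rw [hD_c1] at hx
        omega
    · have hpi : j = p i' := hAdjLR j i' hadj
      have : p.symm j = i' := by rw [hpi, Equiv.symm_apply_apply]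
      simp [hnavW, this]
    · rw [Set.mem_compl_iff, hmemR] at hx
      rw [Set.mem_compl_iff, hmemL] at hy
      have hpi : j' = p i := hAdjRL i j' hadj
      have his : i ≠ s := by
        rintro rfl
        rw [hpi, h2] at hy
        rw [hD_c1] at hy
        exact hy rfl
      have hic : i ≠ c2 := by
        rintro rfl
        rw [hpi, h3] at hy
        exact hy hF3
      simp [hnavW, his, hic, hpi]
    · rw [Set.mem_compl_iff, hmemR] at hx hy
      rcases hAdjRR i i' hadj with h | h
      · obtain ⟨rfl, rfl⟩ := cyc2 i i' h (by omega)
        simp [hnavW]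
      · obtain ⟨rfl, rfl⟩ := cyc2 i' i h (by omega)
        simp [hnavW, hsc2.symm]
  -- cardinality: involution swapping B and Bᶜ
  set φ : (Fin n ⊕ Fin n) → (Fin n ⊕ Fin n) := fun x =>
    match x with
    | .inl j => .inr (j - c1 + c2)
    | .inr i => .inl (i - c2 + c1) with hφ
  have hφφ : ∀ x, φ (φ x) = x := by
    rintro (j | i) <;> simp only [hφ] <;> congr 1 <;> abel
  have hswap : ∀ x, x ∈ B ↔ φ x ∈ Bᶜ := by
    rintro (j | i)
    · rw [Set.mem_compl_iff]
      show (j - c1).val % 2 = 0 ↔ ¬((j - c1 + c2 - c2).val % 2 = 1)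
      rw [add_sub_cancel_right]
      omega
    · rw [Set.mem_compl_iff]
      show (i - c2).val % 2 = 1 ↔ ¬((i - c2 + c1 - c1).val % 2 = 0)
      rw [add_sub_cancel_right]
      omega
  have hφinj : Function.Injective φ := Function.LeftInverse.injective hφφ
  have himg : φ '' B = Bᶜ := by
    ext y
    constructor
    · rintro ⟨x, hx, rfl⟩
      exact (hswap x).mp hx
    · intro hy
      refine ⟨φ y, ?_, hφφ y⟩
      have := (hswap (φ y))
      rw [hφφ y] at this
      exact this.mpr hy
  have hcard : 2 * B.ncard = Fintype.card (Fin n ⊕ Fin n) := by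
    have h1' : B.ncard + Bᶜ.ncard = Nat.card (Fin n ⊕ Fin n) :=
      Set.ncard_add_ncard_compl B
    have h2' : Bᶜ.ncard = B.ncard := by
      rw [← himg, Set.ncard_image_of_injective _ hφinj]
    rw [Nat.card_eq_fintype_card] at h1'
    omega
  refine ⟨B, hcard, ?_, ?_⟩
  · apply small_of_deg_le_one
    rintro ⟨x, hx⟩ ⟨y, hy⟩ ⟨z, hz⟩ hxy hxz
    have hxy' : G.Adj x y := hxy
    have hxz' : G.Adj x z := hxz
    have e1 := charB x y hx hy hxy'
    have e2 := charB x z hx hz hxz'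
    exact Subtype.ext (e1.trans e2.symm)
  · apply small_of_deg_le_one
    rintro ⟨x, hx⟩ ⟨y, hy⟩ ⟨z, hz⟩ hxy hxz
    have hxy' : G.Adj x y := hxy
    have hxz' : G.Adj x z := hxz
    have e1 := charW x y hx hy hxy'
    have e2 := charW x z hx hz hxz'
    exact Subtype.ext (e1.trans e2.symm)
end

section
/- If a cubic graph G with |V(G)| ≡ 2 (mod 4) admits a Strong Wormald Colouring (in the mod-4-remainder-2 sense, with one uncoloured edge xy), then G admits a bisection whose two induced monochromatic subgraphs are isomorphic linear forests. -/
open SimpleGraph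

/-- If a cubic graph `G` of order `2 (mod 4)` admits a Strong Wormald Colouring — an edge
`xy` together with a 2-colouring of the remaining edges (black `S`, white the rest) whose
monochromatic subgraphs are isomorphic linear forests with all paths of length at least 2,
with `x` incident to two white edges and `y` incident to two black edges — then `G` admits
a bisection whose two induced monochromatic subgraphs are isomorphic linear forests. -/
theorem stmt18 {V : Type*} [Fintype V] (G : SimpleGraph V) [DecidableRel G.Adj]
    (hcubic : G.IsRegularOfDegree 3) (hmod : Fintype.card V % 4 = 2)
    (x y : V) (hxy : G.Adj x y)
    (S : Set (Sym2 V)) (hS : S ⊆ G.edgeSet \ {s(x, y)})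
    (hlfB : IsLinearForest (SimpleGraph.fromEdgeSet S))
    (hlfW : IsLinearForest (SimpleGraph.fromEdgeSet ((G.edgeSet \ {s(x, y)}) \ S)))
    (hiso : Nonempty ((SimpleGraph.fromEdgeSet S) ≃g
      (SimpleGraph.fromEdgeSet ((G.edgeSet \ {s(x, y)}) \ S))))
    (hlenB : ∀ u v : V, (SimpleGraph.fromEdgeSet S).Adj u v →
      ((SimpleGraph.fromEdgeSet S).neighborSet u).ncard = 2 ∨
      ((SimpleGraph.fromEdgeSet S).neighborSet v).ncard = 2)
    (hlenW : ∀ u v : V, (SimpleGraph.fromEdgeSet ((G.edgeSet \ {s(x, y)}) \ S)).Adj u v →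
      ((SimpleGraph.fromEdgeSet ((G.edgeSet \ {s(x, y)}) \ S)).neighborSet u).ncard = 2 ∨
      ((SimpleGraph.fromEdgeSet ((G.edgeSet \ {s(x, y)}) \ S)).neighborSet v).ncard = 2)
    (hx : ((SimpleGraph.fromEdgeSet ((G.edgeSet \ {s(x, y)}) \ S)).neighborSet x).ncard = 2)
    (hy : ((SimpleGraph.fromEdgeSet S).neighborSet y).ncard = 2) :
    ∃ B : Set V, 2 * B.ncard = Fintype.card V ∧
      Nonempty (G.induce B ≃g G.induce Bᶜ) ∧
      IsLinearForest (G.induce B) ∧ IsLinearForest (G.induce Bᶜ) := by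
  
  classical
  obtain ⟨φ⟩ := hiso
  set GB := SimpleGraph.fromEdgeSet S with hGBdef
  set GW := SimpleGraph.fromEdgeSet ((G.edgeSet \ {s(x, y)}) \ S) with hGWdef
  -- black/white edges are G-edges
  have hBG : ∀ {a b : V}, GB.Adj a b → G.Adj a b := by
    intro a b h
    rw [hGBdef, SimpleGraph.fromEdgeSet_adj] at h
    exact (SimpleGraph.mem_edgeSet G).mp (hS h.1).1
  have hWG : ∀ {a b : V}, GW.Adj a b → G.Adj a b := by
    intro a b h
    rw [hGWdef, SimpleGraph.fromEdgeSet_adj] at h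
    exact (SimpleGraph.mem_edgeSet G).mp h.1.1.1
  -- classification of edges
  have hclass : ∀ a b : V, G.Adj a b → GB.Adj a b ∨ GW.Adj a b ∨ s(a, b) = s(x, y) := by
    intro a b h
    by_cases he : s(a, b) = s(x, y)
    · exact Or.inr (Or.inr he)
    by_cases hs : s(a, b) ∈ S
    · exact Or.inl ((SimpleGraph.fromEdgeSet_adj _).mpr ⟨hs, h.ne⟩)
    · exact Or.inr (Or.inl ((SimpleGraph.fromEdgeSet_adj _).mpr ⟨⟨⟨h, he⟩, hs⟩, h.ne⟩))
  -- disjointness of black and white neighbourhoods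
  have hdisj : ∀ v : V, Disjoint (GB.neighborSet v) (GW.neighborSet v) := by
    intro v
    rw [Set.disjoint_left]
    intro u hu hu'
    have h1 : s(v, u) ∈ S := ((SimpleGraph.fromEdgeSet_adj _).mp hu).1
    have h2 : s(v, u) ∉ S := ((SimpleGraph.fromEdgeSet_adj _).mp hu').1.2
    exact h2 h1
  have hcard : ∀ v : V, (G.neighborSet v).ncard = 3 := by
    intro v
    rw [Set.ncard_eq_toFinset_card', ← SimpleGraph.neighborFinset_def,
      SimpleGraph.card_neighborFinset_eq_degree]
    exact hcubic v
  -- degree sum for vertices other than x and y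
  have hsum3 : ∀ v : V, v ≠ x → v ≠ y →
      (GB.neighborSet v).ncard + (GW.neighborSet v).ncard = 3 := by
    intro v hvx hvy
    have hunion : G.neighborSet v = GB.neighborSet v ∪ GW.neighborSet v := by
      ext u
      simp only [SimpleGraph.mem_neighborSet, Set.mem_union]
      constructor
      · intro h
        rcases hclass v u h with h1 | h2 | h3
        · exact Or.inl h1
        · exact Or.inr h2
        · rcases Sym2.eq_iff.mp h3 with ⟨rfl, rfl⟩ | ⟨rfl, rfl⟩
          · exact absurd rfl hvx
          · exact absurd rfl hvy
      · rintro (h | h)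
        · exact hBG h
        · exact hWG h
    have h1 := Set.ncard_union_eq (hdisj v) (Set.toFinite _) (Set.toFinite _)
    rw [← hunion, hcard v] at h1
    omega
  -- degree sum for x and y
  have key : ∀ v p : V, s(v, p) = s(x, y) → G.Adj v p →
      (GB.neighborSet v).ncard + (GW.neighborSet v).ncard ≤ 2 := by
    intro v p hvp hadj
    have hsubv : GB.neighborSet v ∪ GW.neighborSet v ⊆ G.neighborSet v \ {p} := by
      rintro u hu
      have hGadj : G.Adj v u := by
        rcases hu with h | h
        · exact hBG h
        · exact hWG h
      refine ⟨hGadj, ?_⟩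
      simp only [Set.mem_singleton_iff]
      rintro rfl
      rcases hu with h | h
      · exact (hS ((SimpleGraph.fromEdgeSet_adj _).mp h).1).2 hvp
      · exact ((SimpleGraph.fromEdgeSet_adj _).mp h).1.1.2 hvp
    have h2 := Set.ncard_le_ncard hsubv (Set.toFinite _)
    rw [Set.ncard_union_eq (hdisj v) (Set.toFinite _) (Set.toFinite _)] at h2
    have h3 : p ∈ G.neighborSet v := hadj
    rw [Set.ncard_diff_singleton_of_mem h3, hcard v] at h2
    omega
  have hsx := key x y rfl hxy
  have hsy := key y x (Sym2.eq_swap) hxy.symm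
  have hbdx0 : (GB.neighborSet x).ncard = 0 := by omega
  have hwdy0 : (GW.neighborSet y).ncard = 0 := by omega
  have hBle : ∀ v : V, (GB.neighborSet v).ncard ≤ 2 := hlfB.2
  have hWle : ∀ v : V, (GW.neighborSet v).ncard ≤ 2 := hlfW.2
  have hnotboth : ∀ v : V,
      ¬((GB.neighborSet v).ncard = 2 ∧ (GW.neighborSet v).ncard = 2) := by
    intro v hv
    by_cases hvx : v = x
    · subst hvx; omega
    by_cases hvy : v = y
    · subst hvy; omega
    have := hsum3 v hvx hvy
    omega
  set B : Set V := {v : V | (GB.neighborSet v).ncard = 2} with hBdef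
  have hmemB : ∀ v : V, v ∈ B ↔ (GB.neighborSet v).ncard = 2 := fun v => Iff.rfl
  have hmemBc : ∀ v : V, v ∈ Bᶜ ↔ (GW.neighborSet v).ncard = 2 := by
    intro v
    rw [Set.mem_compl_iff, hmemB]
    by_cases hvx : v = x
    · subst hvx; omega
    by_cases hvy : v = y
    · subst hvy; omega
    have := hsum3 v hvx hvy
    have := hBle v
    have := hWle v
    omega
  have hyB : y ∈ B := hy
  -- induced adjacency within B is black adjacency
  have hadjB : ∀ a b : V, a ∈ B → b ∈ B → (G.Adj a b ↔ GB.Adj a b) := by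
    intro a b ha hb
    constructor
    · intro h
      rcases hclass a b h with h1 | h2 | h3
      · exact h1
      · exfalso
        rcases hlenW a b h2 with hw | hw
        · exact hnotboth a ⟨ha, hw⟩
        · exact hnotboth b ⟨hb, hw⟩
      · exfalso
        rcases Sym2.eq_iff.mp h3 with ⟨rfl, rfl⟩ | ⟨rfl, rfl⟩
        · rw [hmemB] at ha; omega
        · rw [hmemB] at hb; omega
    · exact fun h => hBG h
  have hadjW : ∀ a b : V, a ∈ Bᶜ → b ∈ Bᶜ → (G.Adj a b ↔ GW.Adj a b) := by
    intro a b ha hb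
    constructor
    · intro h
      rcases hclass a b h with h1 | h2 | h3
      · exfalso
        rw [Set.mem_compl_iff, hmemB] at ha hb
        rcases hlenB a b h1 with hw | hw
        · exact ha hw
        · exact hb hw
      · exact h2
      · exfalso
        rcases Sym2.eq_iff.mp h3 with ⟨rfl, rfl⟩ | ⟨rfl, rfl⟩
        · exact (Set.mem_compl_iff _ _).mp hb hy
        · exact (Set.mem_compl_iff _ _).mp ha hy
    · exact fun h => hWG h
  -- the isomorphism preserves degrees
  have hdeg : ∀ v : V, (GW.neighborSet (φ v)).ncard = (GB.neighborSet v).ncard := by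
    intro v
    rw [← Nat.card_coe_set_eq, ← Nat.card_coe_set_eq]
    exact (Nat.card_congr (φ.mapNeighborSet v)).symm
  have himg : φ '' B = Bᶜ := by
    ext w
    simp only [Set.mem_image]
    constructor
    · rintro ⟨v, hv, rfl⟩
      rw [hmemBc, hdeg v]
      exact hv
    · intro hw
      refine ⟨φ.symm w, ?_, by simp⟩
      rw [hmemB, ← hdeg (φ.symm w)]
      have : φ (φ.symm w) = w := by simp
      rw [this]
      exact (hmemBc w).mp hw
  have hcardBc : Bᶜ.ncard = B.ncard := by
    rw [← himg]
    exact Set.ncard_image_of_injective _ (RelIso.injective φ)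
  have hmemc : ∀ a : V, a ∈ B → φ a ∈ Bᶜ := by
    intro a ha
    rw [← himg]
    exact Set.mem_image_of_mem _ ha
  have hmemc' : ∀ b : V, b ∈ Bᶜ → φ.symm b ∈ B := by
    intro b hb
    rw [← himg] at hb
    obtain ⟨v, hv, rfl⟩ := hb
    simpa using hv
  refine ⟨B, ?_, ⟨?_⟩, ?_, ?_⟩
  · have h1 := Set.ncard_add_ncard_compl B
    rw [Nat.card_eq_fintype_card] at h1
    omega
  · -- the isomorphism of induced subgraphs
    refine ⟨⟨fun a => ⟨φ a, hmemc a a.2⟩, fun b => ⟨φ.symm b, hmemc' b b.2⟩,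
      fun a => ?_, fun b => ?_⟩, ?_⟩
    · apply Subtype.ext; simp
    · apply Subtype.ext; simp
    · intro a b
      show G.Adj (φ a) (φ b) ↔ G.Adj a b
      rw [hadjW _ _ (hmemc a a.2) (hmemc b b.2), hadjB _ _ a.2 b.2]
      exact φ.map_rel_iff
  · -- induce B is a linear forest
    have ιB : G.induce B ↪g GB :=
      ⟨⟨Subtype.val, Subtype.val_injective⟩, by
        intro a b
        exact (hadjB a b a.2 b.2).symm⟩
    constructor
    · intro a c hc
      exact hlfB.1 (c.map ιB.toHom)
        ((SimpleGraph.Walk.map_isCycle_iff_of_injective ιB.injective).mpr hc)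
    · intro a
      have hsub : Subtype.val '' ((G.induce B).neighborSet a) ⊆ GB.neighborSet a.val := by
        rintro _ ⟨b, hb, rfl⟩
        exact (hadjB _ _ a.2 b.2).mp hb
      calc ((G.induce B).neighborSet a).ncard
          = (Subtype.val '' ((G.induce B).neighborSet a)).ncard :=
            (Set.ncard_image_of_injective _ Subtype.val_injective).symm
        _ ≤ (GB.neighborSet a.val).ncard := Set.ncard_le_ncard hsub (Set.toFinite _)
        _ ≤ 2 := hBle _
  · -- induce Bᶜ is a linear forest
    have ιW : G.induce Bᶜ ↪g GW :=
      ⟨⟨Subtype.val, Subtype.val_injective⟩, by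
        intro a b
        exact (hadjW a b a.2 b.2).symm⟩
    constructor
    · intro a c hc
      exact hlfW.1 (c.map ιW.toHom)
        ((SimpleGraph.Walk.map_isCycle_iff_of_injective ιW.injective).mpr hc)
    · intro a
      have hsub : Subtype.val '' ((G.induce Bᶜ).neighborSet a) ⊆ GW.neighborSet a.val := by
        rintro _ ⟨b, hb, rfl⟩
        exact (hadjW _ _ a.2 b.2).mp hb
      calc ((G.induce Bᶜ).neighborSet a).ncard
          = (Subtype.val '' ((G.induce Bᶜ).neighborSet a)).ncard :=
            (Set.ncard_image_of_injective _ Subtype.val_injective).symm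
        _ ≤ (GW.neighborSet a.val).ncard := Set.ncard_le_ncard hsub (Set.toFinite _)
        _ ≤ 2 := hWle _
end
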